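/- arXiv:2603.28712 — 7 statements merged into one kernel-verified Lean document; each statement's English description precedes it below -/
import Mathlib

section
/- Let ρ be an n×n density matrix with positive semidefinite square root √ρ, and let P = {P_i} be a complete family of orthogonal projectors. Then 1 − Σ_i Tr[(P_i √ρ P_i)^2] = −(1/2) Σ_i Tr([√ρ, P_i]^2), where [A,B] = AB − BA; that is, C_{0.5,1}(ρ,P) equals the sum Σ_i I_{WY}(ρ, P_i) of the Wigner–Yanase skew informations I_{WY}(ρ,A) = −(1/2)Tr([√ρ, A]^2). -/
open Matrix
open scoped ComplexOrder Classical

namespace BlockCoherence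

variable {n : Type*} [Fintype n] [DecidableEq n]

/-- Real part of the trace of a complex matrix. -/
noncomputable def retr (A : Matrix n n ℂ) : ℝ := (Matrix.trace A).re

/-- A density matrix: positive semidefinite with trace 1. -/
def IsDensityMatrix (ρ : Matrix n n ℂ) : Prop := ρ.PosSemidef ∧ Matrix.trace ρ = 1

/-- A complete family of orthogonal projectors. -/
def IsProjFamily {K : Type*} [Fintype K] (P : K → Matrix n n ℂ) : Prop :=
  (∀ k, (P k).IsHermitian) ∧ (∀ k, P k * P k = P k) ∧
    (∀ j k, j ≠ k → P j * P k = 0) ∧ (∑ k, P k = 1)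

/-- Block dephasing map Δ(ρ) = Σ_k P_k ρ P_k. -/
noncomputable def deph {K : Type*} [Fintype K] (P : K → Matrix n n ℂ)
    (ρ : Matrix n n ℂ) : Matrix n n ℂ := ∑ k, P k * ρ * P k

/-- Block incoherent (free) states. -/
def IsBlockIncoherent {K : Type*} [Fintype K] (P : K → Matrix n n ℂ)
    (σ : Matrix n n ℂ) : Prop := IsDensityMatrix σ ∧ σ = deph P σ

/-- A block-incoherent operation presented by its Kraus operators. -/
def IsBIOp {K : Type*} [Fintype K] {N : Type*} [Fintype N]
    (P : K → Matrix n n ℂ) (Kr : N → Matrix n n ℂ) : Prop :=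
  (∑ m, (Kr m)ᴴ * Kr m = 1) ∧
    ∀ (m : N) (i j : K), i ≠ j → ∀ σ, IsBlockIncoherent P σ →
      P i * (Kr m * σ * (Kr m)ᴴ) * P j = 0

/-- The channel determined by Kraus operators. -/
noncomputable def krausApply {N : Type*} [Fintype N]
    (Kr : N → Matrix n n ℂ) (ρ : Matrix n n ℂ) : Matrix n n ℂ :=
  ∑ m, Kr m * ρ * (Kr m)ᴴ

/-- A block coherence measure: conditions (B1)-(B4). -/
structure IsBlockCoherenceMeasure {K : Type*} [Fintype K] (P : K → Matrix n n ℂ)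
    (C : Matrix n n ℂ → ℝ) : Prop where
  nonneg : ∀ ρ, IsDensityMatrix ρ → 0 ≤ C ρ
  eq_zero_iff : ∀ ρ, IsDensityMatrix ρ → (C ρ = 0 ↔ IsBlockIncoherent P ρ)
  monotone : ∀ ρ, IsDensityMatrix ρ → ∀ {N : Type} [Fintype N] (Kr : N → Matrix n n ℂ),
    IsBIOp P Kr → C (krausApply Kr ρ) ≤ C ρ
  strong_monotone : ∀ ρ, IsDensityMatrix ρ → ∀ {N : Type} [Fintype N] (Kr : N → Matrix n n ℂ),
    IsBIOp P Kr →
      ∑ m, (if retr (Kr m * ρ * (Kr m)ᴴ) = 0 then (0 : ℝ) else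
        retr (Kr m * ρ * (Kr m)ᴴ) *
          C ((retr (Kr m * ρ * (Kr m)ᴴ))⁻¹ • (Kr m * ρ * (Kr m)ᴴ))) ≤ C ρ
  convex : ∀ {N : Type} [Fintype N] (p : N → ℝ) (ρs : N → Matrix n n ℂ),
    (∀ m, 0 ≤ p m) → ∑ m, p m = 1 → (∀ m, IsDensityMatrix (ρs m)) →
      C (∑ m, p m • ρs m) ≤ ∑ m, p m * C (ρs m)

/-- Real power of a matrix via the spectral functional calculus (0 on non-Hermitian input). -/
noncomputable def mpow (A : Matrix n n ℂ) (t : ℝ) : Matrix n n ℂ :=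
  if hA : A.IsHermitian then
    (hA.eigenvectorUnitary : Matrix n n ℂ) *
      Matrix.diagonal (fun i => ((hA.eigenvalues i ^ t : ℝ) : ℂ)) *
      (star (hA.eigenvectorUnitary : Matrix n n ℂ))
  else 0

/-- Positive semidefinite square root (0 on non-PSD input). -/
noncomputable def msqrt (A : Matrix n n ℂ) : Matrix n n ℂ :=
  if hA : A.PosSemidef then
    (hA.1.eigenvectorUnitary : Matrix n n ℂ) *
      Matrix.diagonal (fun i => ((Real.sqrt (hA.1.eigenvalues i) : ℝ) : ℂ)) *
      (star (hA.1.eigenvectorUnitary : Matrix n n ℂ))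
  else 0

/-- Base-2 matrix logarithm via spectral calculus, with the convention log 0 = 0. -/
noncomputable def mlog2 (A : Matrix n n ℂ) : Matrix n n ℂ :=
  if hA : A.IsHermitian then
    (hA.eigenvectorUnitary : Matrix n n ℂ) *
      Matrix.diagonal (fun i => ((Real.logb 2 (hA.eigenvalues i) : ℝ) : ℂ)) *
      (star (hA.eigenvectorUnitary : Matrix n n ℂ))
  else 0

/-- Trace norm ‖M‖_Tr = Tr √(MᴴM). -/
noncomputable def trNorm (M : Matrix n n ℂ) : ℝ :=
  retr (msqrt (Mᴴ * M))

/-- The α-z Rényi block coherence measure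
`C_{α,z}(ρ,P) = 1 - (max_{σ∈I_B} Tr[(σ^{(1-α)/(2z)} ρ^{α/z} σ^{(1-α)/(2z)})^z])^{1/α}`. -/
noncomputable def Caz {K : Type*} [Fintype K] (α z : ℝ) (P : K → Matrix n n ℂ)
    (ρ : Matrix n n ℂ) : ℝ :=
  1 - (sSup {x : ℝ | ∃ σ, IsBlockIncoherent P σ ∧
    x = retr (mpow (mpow σ ((1 - α) / (2 * z)) * mpow ρ (α / z) *
      mpow σ ((1 - α) / (2 * z))) z)}) ^ (1 / α)


/-- `C_{0.5,1}(ρ,P) = 1 - Σ_i Tr[(P_i √ρ P_i)²]` equals the sum of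
the Wigner-Yanase skew informations `-(1/2) Tr([√ρ, P_i]²)`. -/
theorem Caz_half_one_eq_sum_skewInformation
    {K : Type*} [Fintype K]
    (P : K → Matrix n n ℂ) (hP : IsProjFamily P)
    (ρ : Matrix n n ℂ) (hρ : IsDensityMatrix ρ) :
    1 - ∑ i, retr ((P i * msqrt ρ * P i) * (P i * msqrt ρ * P i)) =
      ∑ i, -(1 / 2) * retr ((msqrt ρ * P i - P i * msqrt ρ) *
        (msqrt ρ * P i - P i * msqrt ρ)) := by
  obtain ⟨hHerm, hIdem, hOrth, hSum⟩ := hP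
  set s := msqrt ρ with hs
  have hss : s * s = ρ := by
    rw [hs, msqrt, dif_pos hρ.1]
    have hU : star (hρ.1.1.eigenvectorUnitary : Matrix n n ℂ) *
        (hρ.1.1.eigenvectorUnitary : Matrix n n ℂ) = 1 := (hρ.1.1.eigenvectorUnitary).2.1
    have hD : Matrix.diagonal (fun i => ((Real.sqrt (hρ.1.1.eigenvalues i) : ℝ) : ℂ)) *
        Matrix.diagonal (fun i => ((Real.sqrt (hρ.1.1.eigenvalues i) : ℝ) : ℂ)) =
        Matrix.diagonal (RCLike.ofReal ∘ hρ.1.1.eigenvalues) := by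
      rw [Matrix.diagonal_mul_diagonal]; congr 1; funext i
      simp only [Function.comp_apply, ← Complex.ofReal_mul,
        Real.mul_self_sqrt (hρ.1.eigenvalues_nonneg i)]; rfl
    conv_rhs => rw [hρ.1.1.spectral_theorem, Unitary.conjStarAlgAut_apply]
    calc _ = (hρ.1.1.eigenvectorUnitary : Matrix n n ℂ) *
          Matrix.diagonal (fun i => ((Real.sqrt (hρ.1.1.eigenvalues i) : ℝ) : ℂ)) *
          (star (hρ.1.1.eigenvectorUnitary : Matrix n n ℂ) *
            (hρ.1.1.eigenvectorUnitary : Matrix n n ℂ)) *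
          Matrix.diagonal (fun i => ((Real.sqrt (hρ.1.1.eigenvalues i) : ℝ) : ℂ)) *
          star (hρ.1.1.eigenvectorUnitary : Matrix n n ℂ) := by simp only [mul_assoc]
      _ = _ := by rw [hU, mul_one, mul_assoc _ (Matrix.diagonal _) (Matrix.diagonal _), hD]
  have key : ∀ i, Matrix.trace ((s * P i - P i * s) * (s * P i - P i * s)) =
      2 * Matrix.trace ((P i * s * P i) * (P i * s * P i)) - 2 * Matrix.trace (ρ * P i) := by
    intro i
    have h1 : (P i * s * P i) * (P i * s * P i) = P i * s * P i * s * P i := by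
      calc (P i * s * P i) * (P i * s * P i) = P i * s * (P i * P i) * s * P i := by
            noncomm_ring
        _ = P i * s * P i * s * P i := by rw [hIdem]
    have h2 : Matrix.trace (P i * s * P i * s * P i) = Matrix.trace (s * P i * s * P i) := by
      calc Matrix.trace (P i * s * P i * s * P i)
          = Matrix.trace (P i * (s * P i * s * P i)) := by noncomm_ring
        _ = Matrix.trace ((s * P i * s * P i) * P i) := Matrix.trace_mul_comm _ _
        _ = Matrix.trace (s * P i * s * (P i * P i)) := by noncomm_ring
        _ = Matrix.trace (s * P i * s * P i) := by rw [hIdem]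
    have h3 : Matrix.trace (P i * s * (s * P i)) = Matrix.trace (ρ * P i) := by
      have e : P i * s * (s * P i) = P i * (ρ * P i) := by
        rw [mul_assoc, ← mul_assoc s s, hss]
      rw [e, Matrix.trace_mul_comm, mul_assoc, hIdem]
    have h4 : Matrix.trace (s * P i * (P i * s)) = Matrix.trace (ρ * P i) := by
      have e : s * P i * (P i * s) = s * (P i * s) := by
        rw [mul_assoc, ← mul_assoc (P i) (P i) s, hIdem]
      rw [e, Matrix.trace_mul_comm, mul_assoc, hss, Matrix.trace_mul_comm]
    have h5 : Matrix.trace (P i * s * (s * P i)) = Matrix.trace (ρ * P i) := h3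
    have h6 : Matrix.trace (P i * s * (P i * s)) = Matrix.trace (s * P i * (s * P i)) := by
      rw [mul_assoc, Matrix.trace_mul_comm]
      congr 1
      simp only [mul_assoc]
    calc Matrix.trace ((s * P i - P i * s) * (s * P i - P i * s))
        = Matrix.trace (s * P i * (s * P i)) - Matrix.trace (s * P i * (P i * s))
          - Matrix.trace (P i * s * (s * P i)) + Matrix.trace (P i * s * (P i * s)) := by
          rw [Matrix.sub_mul, Matrix.mul_sub, Matrix.mul_sub, Matrix.trace_sub,
            Matrix.trace_sub, Matrix.trace_sub]; ring
      _ = 2 * Matrix.trace (s * P i * (s * P i)) - 2 * Matrix.trace (ρ * P i) := by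
          rw [h4, h5, h6]; ring
      _ = 2 * Matrix.trace ((P i * s * P i) * (P i * s * P i)) - 2 * Matrix.trace (ρ * P i) := by
          rw [h1, h2]; congr 2; noncomm_ring
  have hterm : ∀ i, -(1 / 2) * retr ((s * P i - P i * s) * (s * P i - P i * s)) =
      retr (ρ * P i) - retr ((P i * s * P i) * (P i * s * P i)) := by
    intro i
    have := key i
    unfold retr
    rw [this]
    simp [Complex.sub_re, Complex.mul_re]
    ring
  rw [Finset.sum_congr rfl fun i _ => hterm i, Finset.sum_sub_distrib]
  have hsum1 : ∑ i, retr (ρ * P i) = 1 := by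
    unfold retr
    rw [← Complex.re_sum]
    have : ∑ i, Matrix.trace (ρ * P i) = Matrix.trace ρ := by
      rw [← Matrix.trace_sum]
      congr 1
      rw [← Finset.mul_sum, hSum, mul_one]
    rw [this, hρ.2]; simp
  rw [hsum1]


end BlockCoherence
end

section
/- Let P = {P_k} be a complete family of orthogonal projectors, α ∈ (0,1), z ≥ max{α,1−α}, and let U be a unitary matrix satisfying U = Δ(U) (i.e., U = Σ_k P_k U P_k). Then for every density matrix ρ, C_{α,z}(UρU†, P) ≤ C_{α,z}(ρ, P). -/
open Matrix
open scoped ComplexOrder Classical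

namespace BlockCoherence

variable {n : Type*} [Fintype n] [DecidableEq n]

/-- Conjugation by a unitary as a star algebra homomorphism. -/
noncomputable def conjSAH (U : Matrix n n ℂ) (hU : U ∈ Matrix.unitaryGroup n ℂ) :
    Matrix n n ℂ →⋆ₐ[ℂ] Matrix n n ℂ where
  toFun a := U * a * Uᴴ
  map_one' := by
    have h := (Unitary.mem_iff.mp hU).2
    rw [star_eq_conjTranspose] at h
    simp [h]
  map_mul' a b := by
    have h := (Unitary.mem_iff.mp hU).1
    rw [star_eq_conjTranspose] at h
    simp only [mul_assoc]
    rw [← mul_assoc Uᴴ U, h, one_mul]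
  map_zero' := by simp
  map_add' a b := by simp [Matrix.add_mul, Matrix.mul_add]
  commutes' r := by
    have h := (Unitary.mem_iff.mp hU).2
    rw [star_eq_conjTranspose] at h
    simp [Algebra.algebraMap_eq_smul_one, Matrix.mul_smul, Matrix.smul_mul, h]
  map_star' a := by
    simp [star_eq_conjTranspose, Matrix.conjTranspose_mul, mul_assoc]

lemma isHermitian_conj (U : Matrix n n ℂ) {A : Matrix n n ℂ} (hA : A.IsHermitian) :
    (U * A * Uᴴ).IsHermitian := by
  unfold Matrix.IsHermitian
  simp [Matrix.conjTranspose_mul, mul_assoc, hA.eq]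

lemma conj_cancel {V W X : Matrix n n ℂ} (hVW : V * W = 1) : V * (W * X * V) * W = X := by
  calc V * (W * X * V) * W = (V * W) * X * (V * W) := by simp only [mul_assoc]
    _ = X := by rw [hVW, one_mul, mul_one]

lemma mpow_eq_cfc {A : Matrix n n ℂ} (hA : A.IsHermitian) (t : ℝ) :
    mpow A t = cfc (fun x : ℝ => x ^ t) A := by
  rw [mpow, dif_pos hA, hA.cfc_eq]
  rfl

lemma mpow_conj (U : Matrix n n ℂ) (hU : U ∈ Matrix.unitaryGroup n ℂ)
    (A : Matrix n n ℂ) (t : ℝ) (ht : 0 ≤ t) :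
    mpow (U * A * Uᴴ) t = U * mpow A t * Uᴴ := by
  have h1 : Uᴴ * U = 1 := by
    have h := (Unitary.mem_iff.mp hU).1
    rwa [star_eq_conjTranspose] at h
  have h2 : U * Uᴴ = 1 := by
    have h := (Unitary.mem_iff.mp hU).2
    rwa [star_eq_conjTranspose] at h
  by_cases hA : A.IsHermitian
  · have hA' : IsSelfAdjoint A := hA
    have hB : (U * A * Uᴴ).IsHermitian := isHermitian_conj U hA
    have hcont : Continuous (fun x : ℝ => x ^ t) :=
      continuous_iff_continuousAt.mpr fun x => Real.continuousAt_rpow_const x t (Or.inr ht)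
    have hφc : Continuous (conjSAH U hU) := by
      show Continuous fun a : Matrix n n ℂ => U * a * Uᴴ
      exact (continuous_const.matrix_mul continuous_id).matrix_mul continuous_const
    have hφa : IsSelfAdjoint ((conjSAH U hU) A) := hB
    have key := StarAlgHomClass.map_cfc (conjSAH U hU) (fun x : ℝ => x ^ t) A
      hcont.continuousOn hφc hA' hφa
    calc mpow (U * A * Uᴴ) t = cfc (fun x : ℝ => x ^ t) (U * A * Uᴴ) := mpow_eq_cfc hB t
      _ = (conjSAH U hU) (cfc (fun x : ℝ => x ^ t) A) := key.symm
      _ = U * mpow A t * Uᴴ := by rw [mpow_eq_cfc hA]; rfl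
  · have hB : ¬ (U * A * Uᴴ).IsHermitian := by
      intro hB
      apply hA
      have hAeq : Uᴴ * (U * A * Uᴴ) * U = A := conj_cancel h1
      rw [← hAeq]
      have := isHermitian_conj Uᴴ hB
      rwa [conjTranspose_conjTranspose] at this
    rw [mpow, dif_neg hB, mpow, dif_neg hA, mul_zero, zero_mul]

lemma retr_conj {U : Matrix n n ℂ} (h1 : Uᴴ * U = 1) (M : Matrix n n ℂ) :
    retr (U * M * Uᴴ) = retr M := by
  unfold retr
  rw [Matrix.trace_mul_comm (U * M) Uᴴ, ← mul_assoc, h1, one_mul]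

lemma proj_comm {K : Type*} [Fintype K] {P : K → Matrix n n ℂ} (hP : IsProjFamily P)
    {U : Matrix n n ℂ} (hUdeph : U = deph P U) (k : K) : P k * U = U * P k := by
  obtain ⟨hH, hI, hO, hS⟩ := hP
  have h1 : U * P k = P k * U * P k := by
    conv_lhs => rw [hUdeph]
    rw [deph, Finset.sum_mul, Finset.sum_eq_single k]
    · rw [mul_assoc (P k * U) (P k) (P k), hI k]
    · intro j _ hj
      rw [mul_assoc (P j * U) (P j) (P k), hO j k hj, mul_zero]
    · intro h; exact absurd (Finset.mem_univ k) h
  have h2 : P k * U = P k * U * P k := by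
    conv_lhs => rw [hUdeph]
    rw [deph, Finset.mul_sum, Finset.sum_eq_single k]
    · simp only [← mul_assoc]
      rw [hI k]
    · intro j _ hj
      simp only [← mul_assoc]
      rw [hO k j (Ne.symm hj)]
      simp
    · intro h; exact absurd (Finset.mem_univ k) h
  rw [h2, ← h1]

lemma proj_comm_ct {K : Type*} [Fintype K] {P : K → Matrix n n ℂ} (hP : IsProjFamily P)
    {U : Matrix n n ℂ} (hUdeph : U = deph P U) (k : K) : P k * Uᴴ = Uᴴ * P k := by
  have h := congrArg Matrix.conjTranspose (proj_comm hP hUdeph k)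
  simpa [Matrix.conjTranspose_mul, (hP.1 k).eq] using h.symm

lemma deph_ct {K : Type*} [Fintype K] {P : K → Matrix n n ℂ} (hP : IsProjFamily P)
    {U : Matrix n n ℂ} (hUdeph : U = deph P U) : Uᴴ = deph P Uᴴ := by
  conv_lhs => rw [hUdeph]
  rw [deph, deph, Matrix.conjTranspose_sum]
  refine Finset.sum_congr rfl fun k _ => ?_
  simp [Matrix.conjTranspose_mul, (hP.1 k).eq, mul_assoc]

lemma deph_conj {K : Type*} [Fintype K] {P : K → Matrix n n ℂ} (hP : IsProjFamily P)
    {U : Matrix n n ℂ} (hUdeph : U = deph P U) {σ : Matrix n n ℂ} (hσ : σ = deph P σ) :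
    U * σ * Uᴴ = deph P (U * σ * Uᴴ) := by
  have key : ∀ k, P k * (U * σ * Uᴴ) * P k = U * (P k * σ * P k) * Uᴴ := by
    intro k
    calc P k * (U * σ * Uᴴ) * P k
        = (P k * U) * (σ * (Uᴴ * P k)) := by simp only [mul_assoc]
      _ = (U * P k) * (σ * (P k * Uᴴ)) := by
          rw [proj_comm hP hUdeph k, ← proj_comm_ct hP hUdeph k]
      _ = U * (P k * σ * P k) * Uᴴ := by simp only [mul_assoc]
  have hsum : (∑ k, P k * (U * σ * Uᴴ) * P k) = U * (∑ k, P k * σ * P k) * Uᴴ := by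
    rw [Finset.sum_congr rfl fun k _ => key k, ← Finset.sum_mul, ← Finset.mul_sum]
  rw [deph, hsum, show (∑ k, P k * σ * P k) = deph P σ from rfl, ← hσ]

lemma incoh_conj {K : Type*} [Fintype K] {P : K → Matrix n n ℂ} (hP : IsProjFamily P)
    {U : Matrix n n ℂ} (hU : U ∈ Matrix.unitaryGroup n ℂ) (hUdeph : U = deph P U)
    {σ : Matrix n n ℂ} (hσ : IsBlockIncoherent P σ) :
    IsBlockIncoherent P (U * σ * Uᴴ) := by
  have h1 : Uᴴ * U = 1 := by
    have h := (Unitary.mem_iff.mp hU).1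
    rwa [star_eq_conjTranspose] at h
  refine ⟨⟨hσ.1.1.mul_mul_conjTranspose_same U, ?_⟩, deph_conj hP hUdeph hσ.2⟩
  rw [Matrix.trace_mul_comm (U * σ) Uᴴ, ← mul_assoc, h1, one_mul, hσ.1.2]

lemma ct_mem {U : Matrix n n ℂ} (hU : U ∈ Matrix.unitaryGroup n ℂ) :
    Uᴴ ∈ Matrix.unitaryGroup n ℂ := by
  have := Unitary.star_mem hU
  rwa [star_eq_conjTranspose] at this

lemma caz_set_subset {K : Type*} [Fintype K] (P : K → Matrix n n ℂ) (hP : IsProjFamily P)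
    (α z : ℝ) (hs : 0 ≤ (1 - α) / (2 * z)) (ha : 0 ≤ α / z) (hz : 0 ≤ z)
    (U : Matrix n n ℂ) (hU : U ∈ Matrix.unitaryGroup n ℂ) (hUdeph : U = deph P U)
    (ρ : Matrix n n ℂ) :
    {x : ℝ | ∃ σ, IsBlockIncoherent P σ ∧
      x = retr (mpow (mpow σ ((1 - α) / (2 * z)) * mpow (U * ρ * Uᴴ) (α / z) *
        mpow σ ((1 - α) / (2 * z))) z)} ⊆
    {x : ℝ | ∃ σ, IsBlockIncoherent P σ ∧
      x = retr (mpow (mpow σ ((1 - α) / (2 * z)) * mpow ρ (α / z) *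
        mpow σ ((1 - α) / (2 * z))) z)} := by
  rintro x ⟨σ, hσ, rfl⟩
  have h1 : Uᴴ * U = 1 := by
    have h := (Unitary.mem_iff.mp hU).1
    rwa [star_eq_conjTranspose] at h
  have h2 : U * Uᴴ = 1 := by
    have h := (Unitary.mem_iff.mp hU).2
    rwa [star_eq_conjTranspose] at h
  refine ⟨Uᴴ * σ * U, ?_, ?_⟩
  · have := incoh_conj hP (ct_mem hU) (deph_ct hP hUdeph) hσ
    rwa [conjTranspose_conjTranspose] at this
  · have hσeq : σ = U * (Uᴴ * σ * U) * Uᴴ := (conj_cancel h2).symm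
    have e1 : mpow σ ((1 - α) / (2 * z)) =
        U * mpow (Uᴴ * σ * U) ((1 - α) / (2 * z)) * Uᴴ := by
      conv_lhs => rw [hσeq]
      exact mpow_conj U hU _ _ hs
    have e2 : mpow (U * ρ * Uᴴ) (α / z) = U * mpow ρ (α / z) * Uᴴ := mpow_conj U hU ρ _ ha
    have e3 : mpow σ ((1 - α) / (2 * z)) * mpow (U * ρ * Uᴴ) (α / z) *
        mpow σ ((1 - α) / (2 * z)) =
        U * (mpow (Uᴴ * σ * U) ((1 - α) / (2 * z)) * mpow ρ (α / z) *
          mpow (Uᴴ * σ * U) ((1 - α) / (2 * z))) * Uᴴ := by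
      rw [e1, e2]
      simp only [mul_assoc]
      rw [← mul_assoc Uᴴ U, h1, one_mul, ← mul_assoc Uᴴ U, h1, one_mul]
    rw [e3, mpow_conj U hU _ z hz, retr_conj h1]

/-- if `U` is unitary and block diagonal (`U = Δ(U)`), then
`C_{α,z}(UρU†,P) ≤ C_{α,z}(ρ,P)`. -/
theorem Caz_conj_blockDiagonal_unitary_le
    {K : Type*} [Fintype K]
    (P : K → Matrix n n ℂ) (hP : IsProjFamily P)
    (α z : ℝ) (hα : α ∈ Set.Ioo (0 : ℝ) 1) (hz : max α (1 - α) ≤ z)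
    (U : Matrix n n ℂ) (hU : U ∈ Matrix.unitaryGroup n ℂ) (hUdeph : U = deph P U)
    (ρ : Matrix n n ℂ) (hρ : IsDensityMatrix ρ) :
    Caz α z P (U * ρ * Uᴴ) ≤ Caz α z P ρ := by
  have hz0 : 0 < z := lt_of_lt_of_le hα.1 (le_trans (le_max_left _ _) hz)
  have hs : 0 ≤ (1 - α) / (2 * z) := div_nonneg (by linarith [hα.2]) (by linarith)
  have ha' : 0 ≤ α / z := div_nonneg hα.1.le hz0.le
  have h1 : Uᴴ * U = 1 := by
    have h := (Unitary.mem_iff.mp hU).1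
    rwa [star_eq_conjTranspose] at h
  have h2 : U * Uᴴ = 1 := by
    have h := (Unitary.mem_iff.mp hU).2
    rwa [star_eq_conjTranspose] at h
  have hsub1 := caz_set_subset P hP α z hs ha' hz0.le U hU hUdeph ρ
  have hsub2 := caz_set_subset P hP α z hs ha' hz0.le Uᴴ (ct_mem hU)
    (deph_ct hP hUdeph) (U * ρ * Uᴴ)
  have hred : Uᴴ * (U * ρ * Uᴴ) * Uᴴᴴ = ρ := by
    rw [conjTranspose_conjTranspose]
    exact conj_cancel h1
  rw [hred] at hsub2
  have hsets : {x : ℝ | ∃ σ, IsBlockIncoherent P σ ∧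
      x = retr (mpow (mpow σ ((1 - α) / (2 * z)) * mpow (U * ρ * Uᴴ) (α / z) *
        mpow σ ((1 - α) / (2 * z))) z)} =
    {x : ℝ | ∃ σ, IsBlockIncoherent P σ ∧
      x = retr (mpow (mpow σ ((1 - α) / (2 * z)) * mpow ρ (α / z) *
        mpow σ ((1 - α) / (2 * z))) z)} := Set.Subset.antisymm hsub1 hsub2
  unfold Caz
  rw [hsets]

end BlockCoherence
end

section
/- Let {P₁, P₂} be a complete family of two orthogonal projectors (P₁ + P₂ = I, P₁P₂ = 0), Δ(ρ) = P₁ρP₁ + P₂ρP₂, and for a density matrix ρ define the trace-norm block coherence C_Tr(ρ) = inf{ ‖ρ − λσ‖_Tr : λ > 0, σ block-incoherent density matrix }, where ‖M‖_Tr = Tr√(M†M). Then C_Tr(ρ) ≤ ‖P₁ρP₂‖_Tr + ‖P₂ρP₁‖_Tr; in particular, C_Tr(ρ) ≤ C̃_{l₁}(ρ) := ‖P₁ρP₂‖_Tr + ‖P₂ρP₁‖_Tr = 2‖P₁ρP₂‖_Tr. -/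
open Matrix
open scoped ComplexOrder Classical

namespace BlockCoherence

variable {n : Type*} [Fintype n] [DecidableEq n]

/-- Trace-norm block coherence `C_Tr(ρ,P) = inf { ‖ρ - λσ‖_Tr : λ > 0, σ ∈ I_B }`. -/
noncomputable def CTr {K : Type*} [Fintype K] (P : K → Matrix n n ℂ)
    (ρ : Matrix n n ℂ) : ℝ :=
  sInf {x : ℝ | ∃ (lam : ℝ) (σ : Matrix n n ℂ), 0 < lam ∧
    IsBlockIncoherent P σ ∧ x = trNorm (ρ - lam • σ)}


/-- PSD square root via the spectral decomposition. -/
noncomputable def _root_.Matrix.PosSemidef.sqrt {A : Matrix n n ℂ} (hA : A.PosSemidef) :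
    Matrix n n ℂ :=
  (hA.1.eigenvectorUnitary : Matrix n n ℂ) *
    Matrix.diagonal (fun i => ((Real.sqrt (hA.1.eigenvalues i) : ℝ) : ℂ)) *
    (star (hA.1.eigenvectorUnitary : Matrix n n ℂ))

open scoped MatrixOrder in
lemma _root_.Matrix.PosSemidef.sqrt_eq_cfc {A : Matrix n n ℂ} (hA : A.PosSemidef) :
    hA.sqrt = CFC.sqrt A := by
  rw [CFC.sqrt_eq_cfc, cfc_nnreal_eq_real _ A hA.nonneg, hA.1.cfc_eq, IsHermitian.cfc,
    Unitary.conjStarAlgAut_apply, Matrix.PosSemidef.sqrt]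
  congr 3
  funext i
  simp [Real.coe_sqrt, Real.coe_toNNReal', max_eq_left (hA.eigenvalues_nonneg i)]

open scoped MatrixOrder in
lemma _root_.Matrix.PosSemidef.posSemidef_sqrt {A : Matrix n n ℂ} (hA : A.PosSemidef) :
    hA.sqrt.PosSemidef := by
  rw [hA.sqrt_eq_cfc]
  exact (CFC.sqrt_nonneg A).posSemidef

open scoped MatrixOrder in
lemma _root_.Matrix.PosSemidef.sqrt_mul_self {A : Matrix n n ℂ} (hA : A.PosSemidef) :
    hA.sqrt * hA.sqrt = A := by
  rw [hA.sqrt_eq_cfc]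
  exact CFC.sqrt_mul_sqrt_self A hA.nonneg

open scoped MatrixOrder in
lemma _root_.Matrix.PosSemidef.eq_sqrt_of_sq_eq {A B : Matrix n n ℂ} (hA : A.PosSemidef)
    (hB : B.PosSemidef) (h : A ^ 2 = B) : A = hB.sqrt := by
  rw [hB.sqrt_eq_cfc]
  exact (CFC.sqrt_unique (by rw [← pow_two]; exact h) hA.nonneg).symm

lemma psd_eq_zero_of_sq {P : Matrix n n ℂ} (hP : P.PosSemidef) (h : P * P = 0) : P = 0 := by
  have h' : Pᴴ * P = 0 := by rw [hP.1]; exact h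
  exact Matrix.conjTranspose_mul_self_eq_zero.mp h'

lemma sqrt_mul_sqrt_eq_zero {A B : Matrix n n ℂ} (hA : A.PosSemidef) (hB : B.PosSemidef)
    (hAB : A * B = 0) : hA.sqrt * hB.sqrt = 0 := by
  set S := hA.sqrt with hS
  set T := hB.sqrt with hT
  have hTAT : T * A * T = 0 := by
    have hpsd : (T * A * T).PosSemidef := by
      have := hA.mul_mul_conjTranspose_same T
      rwa [hB.posSemidef_sqrt.1] at this
    refine psd_eq_zero_of_sq hpsd ?_
    have h1 : A * (T * T) = 0 := by rw [hB.sqrt_mul_self, hAB]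
    calc T * A * T * (T * A * T) = T * (A * (T * T) * (A * T)) := by simp only [mul_assoc]
      _ = 0 := by rw [h1, zero_mul, mul_zero]
  have h2 : (S * T)ᴴ * (S * T) = 0 := by
    rw [conjTranspose_mul, hA.posSemidef_sqrt.1, hB.posSemidef_sqrt.1]
    calc T * S * (S * T) = T * (S * S) * T := by simp only [mul_assoc]
      _ = T * A * T := by rw [hA.sqrt_mul_self]
      _ = 0 := hTAT
  exact Matrix.conjTranspose_mul_self_eq_zero.mp h2

lemma sqrt_add_of_mul_eq_zero {A B : Matrix n n ℂ} (hA : A.PosSemidef) (hB : B.PosSemidef)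
    (hAB : A * B = 0) : (hA.add hB).sqrt = hA.sqrt + hB.sqrt := by
  have hBA : B * A = 0 := by
    have := congrArg conjTranspose hAB
    rwa [conjTranspose_mul, hA.1, hB.1, conjTranspose_zero] at this
  have hST := sqrt_mul_sqrt_eq_zero hA hB hAB
  have hTS := sqrt_mul_sqrt_eq_zero hB hA hBA
  refine ((hA.posSemidef_sqrt.add hB.posSemidef_sqrt).eq_sqrt_of_sq_eq (hA.add hB) ?_).symm
  rw [pow_two, add_mul, mul_add, mul_add, hA.sqrt_mul_self, hB.sqrt_mul_self, hST, hTS]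
  simp

lemma retr_sqrt {A : Matrix n n ℂ} (hA : A.PosSemidef) :
    retr hA.sqrt = ∑ i, Real.sqrt (hA.1.eigenvalues i) := by
  have hU : (star hA.1.eigenvectorUnitary.1 : Matrix n n ℂ) * hA.1.eigenvectorUnitary.1 = 1 :=
    Matrix.mem_unitaryGroup_iff'.mp hA.1.eigenvectorUnitary.2
  rw [retr, Matrix.PosSemidef.sqrt, Matrix.trace_mul_cycle, hU, one_mul, Matrix.trace_diagonal]
  rw [Complex.re_sum]
  simp

lemma msqrt_of_posSemidef {A : Matrix n n ℂ} (hA : A.PosSemidef) : msqrt A = hA.sqrt :=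
  dif_pos hA

lemma trNorm_eq (M : Matrix n n ℂ) :
    trNorm M = ∑ i, Real.sqrt ((posSemidef_conjTranspose_mul_self M).1.eigenvalues i) := by
  rw [trNorm, msqrt_of_posSemidef (posSemidef_conjTranspose_mul_self M), retr_sqrt]

lemma trNorm_nonneg (M : Matrix n n ℂ) : 0 ≤ trNorm M := by
  rw [trNorm_eq]
  exact Finset.sum_nonneg fun i _ => Real.sqrt_nonneg _

lemma trNorm_add_of_orth {X Y : Matrix n n ℂ} (hXY : Xᴴ * Y = 0) (hYX : Yᴴ * X = 0)
    (hABorth : (Xᴴ * X) * (Yᴴ * Y) = 0) :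
    trNorm (X + Y) = trNorm X + trNorm Y := by
  have hA := posSemidef_conjTranspose_mul_self X
  have hB := posSemidef_conjTranspose_mul_self Y
  have hexp : (X + Y)ᴴ * (X + Y) = Xᴴ * X + Yᴴ * Y := by
    rw [conjTranspose_add, add_mul, mul_add, mul_add, hXY, hYX]
    simp
  rw [trNorm, hexp, msqrt_of_posSemidef (hA.add hB), sqrt_add_of_mul_eq_zero hA hB hABorth,
      retr, trace_add, Complex.add_re, trNorm, trNorm, msqrt_of_posSemidef hA,
      msqrt_of_posSemidef hB]
  rfl


lemma key_sqrt : ∀ (x : ℝ), 0 ≤ x → x * (Real.sqrt x)⁻¹ = Real.sqrt x := by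
  intro x hx
  rcases eq_or_lt_of_le hx with h | h
  · simp [← h]
  · have hsp : Real.sqrt x ≠ 0 := ne_of_gt (Real.sqrt_pos.mpr h)
    rw [inv_eq_one_div, mul_one_div, div_eq_iff hsp, Real.mul_self_sqrt hx]

lemma trace_sqrt_MMH (M : Matrix n n ℂ) :
    retr ((posSemidef_self_mul_conjTranspose M).sqrt)
      = ∑ i, Real.sqrt ((posSemidef_conjTranspose_mul_self M).1.eigenvalues i) := by
  have hA := posSemidef_conjTranspose_mul_self M
  set h : (Mᴴ * M).IsHermitian := hA.1 with hh
  set U : Matrix n n ℂ := h.eigenvectorUnitary.1 with hUdef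
  set lam : n → ℝ := h.eigenvalues with hlam
  have hlnn : ∀ i, 0 ≤ lam i := fun i => hA.eigenvalues_nonneg i
  have hU1 : star U * U = 1 := Matrix.mem_unitaryGroup_iff'.mp h.eigenvectorUnitary.2
  have hU2 : U * star U = 1 := Matrix.mem_unitaryGroup_iff.mp h.eigenvectorUnitary.2
  set N : Matrix n n ℂ := M * U with hNdef
  have hNN : Nᴴ * N = diagonal (fun i => (lam i : ℂ)) := by
    have hs : star (h.eigenvectorUnitary : Matrix n n ℂ) * (Mᴴ * M) * (h.eigenvectorUnitary : Matrix n n ℂ)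
        = diagonal (RCLike.ofReal ∘ h.eigenvalues) := by
      have := h.conjStarAlgAut_star_eigenvectorUnitary
      rwa [Unitary.conjStarAlgAut_star_apply] at this
    calc Nᴴ * N = star U * (Mᴴ * M) * U := by
          rw [hNdef, conjTranspose_mul, ← Matrix.star_eq_conjTranspose U]
          simp only [mul_assoc]
      _ = diagonal (fun i => (lam i : ℂ)) := by
          rw [hs]; rfl
  have hcol : ∀ j, lam j = 0 → ∀ i, N i j = 0 := by
    intro j hj i
    have h0 : (Nᴴ * N) j j = 0 := by rw [hNN]; simp [hj]
    have h1 : ∑ k, Complex.normSq (N k j) = 0 := by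
      have := congrArg Complex.re h0
      rw [Matrix.mul_apply] at this
      simpa [Matrix.conjTranspose_apply, Complex.re_sum, Complex.normSq_eq_conj_mul_self,
          Complex.normSq_apply]
        using this
    have := (Finset.sum_eq_zero_iff_of_nonneg
      (fun k _ => Complex.normSq_nonneg (N k j))).mp h1 i (Finset.mem_univ i)
    exact Complex.normSq_eq_zero.mp this
  set d : n → ℝ := fun i => (Real.sqrt (lam i))⁻¹ with hd
  set D : Matrix n n ℂ := diagonal (fun i => (d i : ℂ)) with hD
  set S : Matrix n n ℂ := N * D * Nᴴ with hSdef
  have hSpsd : S.PosSemidef := by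
    set E : Matrix n n ℂ := diagonal (fun i => ((Real.sqrt (d i) : ℝ) : ℂ)) with hE
    have hstar : star (fun i => ((Real.sqrt (d i) : ℝ) : ℂ)) = fun i => ((Real.sqrt (d i) : ℝ) : ℂ) := by
      funext i
      simp [Pi.star_apply, Complex.star_def, Complex.conj_ofReal]
    have hEH : Eᴴ = E := by rw [hE, Matrix.diagonal_conjTranspose, hstar]
    have hfun : (fun i => (d i : ℂ)) = fun i => ((Real.sqrt (d i) : ℝ) : ℂ) * ((Real.sqrt (d i) : ℝ) : ℂ) := by
      funext i
      rw [← Complex.ofReal_mul, Real.mul_self_sqrt (inv_nonneg.mpr (Real.sqrt_nonneg _))]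
    have hDE : D = E * Eᴴ := by
      rw [hEH, hE, Matrix.diagonal_mul_diagonal, hD, hfun]
    have : S = (N * E) * (N * E)ᴴ := by
      rw [conjTranspose_mul, hSdef, hDE]
      simp only [mul_assoc]
    rw [this]
    exact posSemidef_self_mul_conjTranspose _
  have hNe : N * diagonal (fun i => (d i : ℂ) * (lam i : ℂ) * (d i : ℂ)) = N := by
    ext i j
    rw [Matrix.mul_diagonal]
    by_cases hj : lam j = 0
    · rw [hcol j hj i]; ring
    · have hsp : Real.sqrt (lam j) ≠ 0 :=
        ne_of_gt (Real.sqrt_pos.mpr (lt_of_le_of_ne (hlnn j) (Ne.symm hj)))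
      have hrr : d j * lam j * d j = 1 := by
        simp only [hd]
        rw [mul_comm ((Real.sqrt (lam j))⁻¹) (lam j), key_sqrt _ (hlnn j), mul_inv_cancel₀ hsp]
      have hC : (d j : ℂ) * (lam j : ℂ) * (d j : ℂ) = 1 := by
        rw [← Complex.ofReal_mul, ← Complex.ofReal_mul, hrr, Complex.ofReal_one]
      rw [hC, mul_one]
  have hNNH : N * Nᴴ = M * Mᴴ := by
    rw [hNdef, conjTranspose_mul]
    calc M * U * (Uᴴ * Mᴴ) = M * (U * Uᴴ) * Mᴴ := by simp only [mul_assoc]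
      _ = M * Mᴴ := by
          rw [← Matrix.star_eq_conjTranspose U, hU2, mul_one]
  have hSsq : S ^ 2 = M * Mᴴ := by
    rw [pow_two]
    calc S * S = N * (D * (Nᴴ * N) * D) * Nᴴ := by
          rw [hSdef]; simp only [mul_assoc]
      _ = N * diagonal (fun i => (d i : ℂ) * (lam i : ℂ) * (d i : ℂ)) * Nᴴ := by
          rw [hNN, hD, Matrix.diagonal_mul_diagonal, Matrix.diagonal_mul_diagonal]
      _ = N * Nᴴ := by rw [hNe]
      _ = M * Mᴴ := hNNH
  have hSeq : S = (posSemidef_self_mul_conjTranspose M).sqrt :=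
    hSpsd.eq_sqrt_of_sq_eq (posSemidef_self_mul_conjTranspose M) hSsq
  rw [← hSeq, retr, hSdef, Matrix.trace_mul_cycle, hNN, hD, Matrix.diagonal_mul_diagonal,
    Matrix.trace_diagonal]
  rw [Complex.re_sum]
  refine Finset.sum_congr rfl fun i _ => ?_
  show ((lam i : ℂ) * (((Real.sqrt (lam i))⁻¹ : ℝ) : ℂ)).re = Real.sqrt (lam i)
  rw [← Complex.ofReal_mul, key_sqrt _ (hlnn i), Complex.ofReal_re]


lemma trNorm_conjTranspose (M : Matrix n n ℂ) : trNorm Mᴴ = trNorm M := by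
  rw [trNorm, conjTranspose_conjTranspose,
    msqrt_of_posSemidef (posSemidef_self_mul_conjTranspose M), trace_sqrt_MMH, trNorm_eq]

/-- for two orthogonal projectors,
`C_Tr(ρ) ≤ ‖P₁ρP₂‖_Tr + ‖P₂ρP₁‖_Tr = 2‖P₁ρP₂‖_Tr`. -/
theorem CTr_le_l1tilde
    (P₁ P₂ : Matrix n n ℂ) (hP : IsProjFamily ![P₁, P₂])
    (ρ : Matrix n n ℂ) (hρ : IsDensityMatrix ρ) :
    CTr ![P₁, P₂] ρ ≤ trNorm (P₁ * ρ * P₂) + trNorm (P₂ * ρ * P₁) ∧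
      trNorm (P₁ * ρ * P₂) + trNorm (P₂ * ρ * P₁) = 2 * trNorm (P₁ * ρ * P₂) := by
  obtain ⟨hherm, hidem, horth, hsumP⟩ := hP
  have h1 : P₁ᴴ = P₁ := hherm 0
  have h2 : P₂ᴴ = P₂ := hherm 1
  have e1 : P₁ * P₁ = P₁ := hidem 0
  have e2 : P₂ * P₂ = P₂ := hidem 1
  have o12 : P₁ * P₂ = 0 := horth 0 1 (by decide)
  have o21 : P₂ * P₁ = 0 := horth 1 0 (by decide)
  have hsum : P₁ + P₂ = 1 := by simpa [Fin.sum_univ_two] using hsumP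
  have e1' : ∀ Z : Matrix n n ℂ, P₁ * (P₁ * Z) = P₁ * Z := fun Z => by rw [← mul_assoc, e1]
  have e2' : ∀ Z : Matrix n n ℂ, P₂ * (P₂ * Z) = P₂ * Z := fun Z => by rw [← mul_assoc, e2]
  have o12' : ∀ Z : Matrix n n ℂ, P₁ * (P₂ * Z) = 0 := fun Z => by
    rw [← mul_assoc, o12, zero_mul]
  have o21' : ∀ Z : Matrix n n ℂ, P₂ * (P₁ * Z) = 0 := fun Z => by
    rw [← mul_assoc, o21, zero_mul]
  have hρH : ρᴴ = ρ := hρ.1.1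
  have hXH : (P₁ * ρ * P₂)ᴴ = P₂ * ρ * P₁ := by
    simp only [conjTranspose_mul, h1, h2, hρH, mul_assoc]
  have hYH : (P₂ * ρ * P₁)ᴴ = P₁ * ρ * P₂ := by
    simp only [conjTranspose_mul, h1, h2, hρH, mul_assoc]
  have hXY0 : (P₁ * ρ * P₂)ᴴ * (P₂ * ρ * P₁) = 0 := by
    rw [hXH]
    simp only [mul_assoc, o12', mul_zero]
  have hYX0 : (P₂ * ρ * P₁)ᴴ * (P₁ * ρ * P₂) = 0 := by
    rw [hYH]
    simp only [mul_assoc, o21', mul_zero]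
  have hAB0 : ((P₁ * ρ * P₂)ᴴ * (P₁ * ρ * P₂)) * ((P₂ * ρ * P₁)ᴴ * (P₂ * ρ * P₁)) = 0 := by
    rw [hXH, hYH]
    simp only [mul_assoc, e1', e2', o12', o21', mul_zero, zero_mul]
  have hσpsd : (P₁ * ρ * P₁ + P₂ * ρ * P₂).PosSemidef := by
    have g1 := hρ.1.mul_mul_conjTranspose_same P₁
    have g2 := hρ.1.mul_mul_conjTranspose_same P₂
    rw [h1] at g1
    rw [h2] at g2
    exact g1.add g2
  have hσtr : Matrix.trace (P₁ * ρ * P₁ + P₂ * ρ * P₂) = 1 := by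
    rw [trace_add, Matrix.trace_mul_cycle P₁ ρ P₁, Matrix.trace_mul_cycle P₂ ρ P₂, e1, e2,
      ← trace_add, ← Matrix.add_mul, hsum, one_mul, hρ.2]
  have hinc : IsBlockIncoherent ![P₁, P₂] (P₁ * ρ * P₁ + P₂ * ρ * P₂) := by
    refine ⟨⟨hσpsd, hσtr⟩, ?_⟩
    rw [deph, Fin.sum_univ_two]
    simp only [Matrix.cons_val_zero, Matrix.cons_val_one, Matrix.head_cons]
    simp only [mul_add, add_mul, mul_assoc, e1', e2', o12', o21', mul_zero, zero_mul,
      add_zero, zero_add, e1, e2, o12, o21]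
  have hdecomp : ρ - (1 : ℝ) • (P₁ * ρ * P₁ + P₂ * ρ * P₂) = P₁ * ρ * P₂ + P₂ * ρ * P₁ := by
    have hρeq : ρ = (P₁ + P₂) * ρ * (P₁ + P₂) := by rw [hsum, one_mul, mul_one]
    have expand : (P₁ + P₂) * ρ * (P₁ + P₂)
        = P₁ * ρ * P₂ + P₂ * ρ * P₁ + (P₁ * ρ * P₁ + P₂ * ρ * P₂) := by
      simp only [add_mul, mul_add]
      abel
    rw [one_smul, sub_eq_iff_eq_add]
    conv_lhs => rw [hρeq]
    rw [expand]
  have hXaddY : trNorm (P₁ * ρ * P₂ + P₂ * ρ * P₁)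
      = trNorm (P₁ * ρ * P₂) + trNorm (P₂ * ρ * P₁) :=
    trNorm_add_of_orth hXY0 hYX0 hAB0
  have hbdd : BddBelow {x : ℝ | ∃ (lam : ℝ) (σ : Matrix n n ℂ), 0 < lam ∧
      IsBlockIncoherent ![P₁, P₂] σ ∧ x = trNorm (ρ - lam • σ)} := by
    refine ⟨0, fun x hx => ?_⟩
    obtain ⟨l, σ, -, -, rfl⟩ := hx
    exact trNorm_nonneg _
  have hmem : trNorm (P₁ * ρ * P₂) + trNorm (P₂ * ρ * P₁) ∈ {x : ℝ |
      ∃ (lam : ℝ) (σ : Matrix n n ℂ), 0 < lam ∧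
        IsBlockIncoherent ![P₁, P₂] σ ∧ x = trNorm (ρ - lam • σ)} := by
    exact ⟨1, P₁ * ρ * P₁ + P₂ * ρ * P₂, one_pos, hinc, by rw [hdecomp, hXaddY]⟩
  have heq : trNorm (P₂ * ρ * P₁) = trNorm (P₁ * ρ * P₂) := by
    rw [← hXH]
    exact trNorm_conjTranspose _
  constructor
  · exact csInf_le hbdd hmem
  · rw [heq]
    ring


end BlockCoherence
end

section
/- Let P = {P_k} be a complete family of orthogonal projectors and define, for a density matrix ρ, the robustness C_rob(ρ,P) = inf{ s ≥ 0 : there exists a block-incoherent density matrix σ with ρ ≤ (1+s)σ } and the trace-norm measure C_Tr(ρ,P) = inf{ ‖ρ − λσ‖_Tr : λ > 0, σ ∈ I_B }. Then C_rob(ρ,P) ≥ C_Tr(ρ,P). In particular, if s ≥ 0 and σ ∈ I_B satisfy ρ ≤ (1+s)σ, then ‖ρ − (1+s)σ‖_Tr = Tr((1+s)σ − ρ) = s. -/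
open Matrix
open scoped ComplexOrder Classical

namespace BlockCoherence

variable {n : Type*} [Fintype n] [DecidableEq n]

/-- Robustness of block coherence, primal formulation:
`C_rob(ρ,P) = inf { s ≥ 0 : ∃ σ ∈ I_B, ρ ≤ (1+s)σ }`. -/
noncomputable def Crob {K : Type*} [Fintype K] (P : K → Matrix n n ℂ)
    (ρ : Matrix n n ℂ) : ℝ :=
  sInf {s : ℝ | 0 ≤ s ∧ ∃ σ, IsBlockIncoherent P σ ∧ ((1 + s) • σ - ρ).PosSemidef}



lemma trace_eq_sum_ev (A : Matrix n n ℂ) (hA : A.IsHermitian) :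
    A.trace = ∑ i, (hA.eigenvalues i : ℂ) := by
  conv_lhs => rw [hA.spectral_theorem, Unitary.conjStarAlgAut_apply]
  rw [trace_mul_cycle]
  have h1 : (star (hA.eigenvectorUnitary : Matrix n n ℂ)) *
      (hA.eigenvectorUnitary : Matrix n n ℂ) = 1 :=
    Unitary.star_mul_self_of_mem hA.eigenvectorUnitary.prop
  rw [h1, one_mul, trace_diagonal]
  rfl

lemma retr_nonneg_of_psd {A : Matrix n n ℂ} (hA : A.PosSemidef) :
    0 ≤ (A.trace).re := by
  rw [trace_eq_sum_ev A hA.isHermitian, Complex.re_sum]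
  exact Finset.sum_nonneg fun i _ => by simpa using hA.eigenvalues_nonneg i

lemma one_sub_psd {ρ : Matrix n n ℂ} (h : ρ.PosSemidef) (ht : ρ.trace = 1) :
    ((1 : Matrix n n ℂ) - ρ).PosSemidef := by
  have hH := h.isHermitian
  have hsum : ∑ i, hH.eigenvalues i = 1 := by
    have h2 := trace_eq_sum_ev ρ hH
    rw [ht] at h2
    have := congrArg Complex.re h2.symm
    simpa using this
  have hle : ∀ i, hH.eigenvalues i ≤ 1 := by
    intro i
    rw [← hsum]
    exact Finset.single_le_sum (f := hH.eigenvalues)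
      (fun j _ => h.eigenvalues_nonneg j) (Finset.mem_univ i)
  have hU : (hH.eigenvectorUnitary : Matrix n n ℂ) *
      (star (hH.eigenvectorUnitary : Matrix n n ℂ)) = 1 :=
    Unitary.mul_star_self_of_mem hH.eigenvectorUnitary.prop
  have key : (1 : Matrix n n ℂ) - ρ =
      (hH.eigenvectorUnitary : Matrix n n ℂ) *
        Matrix.diagonal (fun i => (1 : ℂ) - (hH.eigenvalues i : ℂ)) *
        (star (hH.eigenvectorUnitary : Matrix n n ℂ)) := by
    have hd : Matrix.diagonal (fun i => (1 : ℂ) - (hH.eigenvalues i : ℂ)) =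
        1 - Matrix.diagonal (RCLike.ofReal ∘ hH.eigenvalues) := by
      rw [← Matrix.diagonal_one, Matrix.diagonal_sub]
      rfl
    rw [hd, mul_sub, sub_mul, mul_one, hU]
    conv_lhs => rw [hH.spectral_theorem, Unitary.conjStarAlgAut_apply]
  rw [key, Matrix.star_eq_conjTranspose]
  refine Matrix.PosSemidef.mul_mul_conjTranspose_same (Matrix.PosSemidef.diagonal ?_) _
  intro i
  show (0 : ℂ) ≤ 1 - (hH.eigenvalues i : ℂ)
  have h3 : ((1 - hH.eigenvalues i : ℝ) : ℂ) = 1 - (hH.eigenvalues i : ℂ) := by push_cast; ring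
  rw [← h3]
  exact Complex.zero_le_real.mpr (by linarith [hle i])

/-- `C_rob(ρ,P) ≥ C_Tr(ρ,P)`; in particular if `ρ ≤ (1+s)σ`
with `σ ∈ I_B` then `‖ρ - (1+s)σ‖_Tr = Tr((1+s)σ - ρ) = s`. -/
theorem CTr_le_Crob
    {K : Type*} [Fintype K]
    (P : K → Matrix n n ℂ) (hP : IsProjFamily P)
    (ρ : Matrix n n ℂ) (hρ : IsDensityMatrix ρ) :
    CTr P ρ ≤ Crob P ρ ∧
      ∀ (s : ℝ) (σ : Matrix n n ℂ), 0 ≤ s → IsBlockIncoherent P σ →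
        ((1 + s) • σ - ρ).PosSemidef →
        trNorm (ρ - (1 + s) • σ) = retr ((1 + s) • σ - ρ) ∧
          retr ((1 + s) • σ - ρ) = s := by
  have key : ∀ (s : ℝ) (σ : Matrix n n ℂ), 0 ≤ s → IsBlockIncoherent P σ →
      ((1 + s) • σ - ρ).PosSemidef →
      trNorm (ρ - (1 + s) • σ) = retr ((1 + s) • σ - ρ) ∧
        retr ((1 + s) • σ - ρ) = s := by
    intro s σ hs hσ hA
    set A := (1 + s) • σ - ρ with hAdef
    have h1 : ρ - (1 + s) • σ = -A := by rw [hAdef]; abel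
    have h2 : (ρ - (1 + s) • σ)ᴴ * (ρ - (1 + s) • σ) = A ^ 2 := by
      rw [h1, conjTranspose_neg, neg_mul_neg, hA.isHermitian.eq, sq]
    have h3 : msqrt (A ^ 2) = A := by
      unfold msqrt
      rw [dif_pos (hA.pow 2)]
      have e1 := (hA.pow 2).1.cfc_eq Real.sqrt
      rw [Matrix.IsHermitian.cfc, Unitary.conjStarAlgAut_apply] at e1
      have e2 : cfc Real.sqrt (A ^ 2) = A := by
        open scoped MatrixOrder in
        rw [← cfcₙ_eq_cfc (f := Real.sqrt) (a := A ^ 2), ← CFC.sqrt_eq_real_sqrt _ (hA.pow 2).nonneg, CFC.sqrt_sq _ hA.nonneg]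
      rw [e2] at e1
      exact e1.symm
    have htr : Matrix.trace A = (s : ℂ) := by
      rw [hAdef, Matrix.trace_sub, Matrix.trace_smul, hσ.1.2, hρ.2]
      rw [Complex.real_smul]
      push_cast
      ring
    have h4 : retr A = s := by
      unfold retr
      rw [htr, Complex.ofReal_re]
    refine ⟨?_, h4⟩
    unfold trNorm
    rw [h2, h3]
  refine ⟨?_, key⟩
  -- nonemptiness of the robustness set
  have hn : 0 < Fintype.card n := by
    rcases Nat.eq_zero_or_pos (Fintype.card n) with h0 | h
    · exfalso
      have : IsEmpty n := Fintype.card_eq_zero_iff.mp h0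
      have ht := hρ.2
      rw [Matrix.trace] at ht
      simp at ht
    · exact h
  have hcne : ((Fintype.card n : ℝ)) ≠ 0 := by positivity
  set c : ℂ := ((Fintype.card n : ℝ)⁻¹ : ℂ) with hc
  set σ0 : Matrix n n ℂ := c • (1 : Matrix n n ℂ) with hσ0
  have hσ0psd : σ0.PosSemidef := by
    rw [hσ0, smul_one_eq_diagonal]
    refine Matrix.PosSemidef.diagonal fun i => ?_
    show (0 : ℂ) ≤ c
    rw [hc, ← Complex.ofReal_inv]
    exact Complex.zero_le_real.mpr (inv_nonneg.mpr (Nat.cast_nonneg _))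
  have hσ0tr : Matrix.trace σ0 = 1 := by
    rw [hσ0, Matrix.trace_smul, Matrix.trace_one, smul_eq_mul, hc]
    push_cast
    field_simp
  have hσ0inc : IsBlockIncoherent P σ0 := by
    refine ⟨⟨hσ0psd, hσ0tr⟩, ?_⟩
    have : deph P σ0 = σ0 := by
      unfold deph
      rw [hσ0]
      simp only [mul_smul_comm, smul_mul_assoc, mul_one, hP.2.1]
      rw [← Finset.smul_sum, hP.2.2.2]
    exact this.symm
  set s₀ : ℝ := (Fintype.card n : ℝ) - 1 with hs₀def
  have hs₀ : 0 ≤ s₀ := by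
    rw [hs₀def]
    have : (1 : ℝ) ≤ (Fintype.card n : ℝ) := by exact_mod_cast hn
    linarith
  have hσ1 : (1 + s₀) • σ0 = (1 : Matrix n n ℂ) := by
    have he : (1 + s₀ : ℝ) = (Fintype.card n : ℝ) := by rw [hs₀def]; ring
    rw [he, hσ0, ← smul_assoc]
    have : ((Fintype.card n : ℝ)) • c = (1 : ℂ) := by
      rw [hc, Complex.real_smul]
      push_cast
      field_simp
    rw [this, one_smul]
  have hBne : {s : ℝ | 0 ≤ s ∧ ∃ σ, IsBlockIncoherent P σ ∧
      ((1 + s) • σ - ρ).PosSemidef}.Nonempty := by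
    refine ⟨s₀, hs₀, σ0, hσ0inc, ?_⟩
    rw [hσ1]
    exact one_sub_psd hρ.1 hρ.2
  have htn : ∀ M : Matrix n n ℂ, 0 ≤ trNorm M := by
    intro M
    unfold trNorm msqrt retr
    rw [dif_pos (Matrix.posSemidef_conjTranspose_mul_self M)]
    refine retr_nonneg_of_psd ?_
    rw [Matrix.star_eq_conjTranspose]
    refine Matrix.PosSemidef.mul_mul_conjTranspose_same (Matrix.PosSemidef.diagonal ?_) _
    intro i
    exact Complex.zero_le_real.mpr (Real.sqrt_nonneg _)
  have hbdd : BddBelow {x : ℝ | ∃ (lam : ℝ) (σ : Matrix n n ℂ), 0 < lam ∧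
      IsBlockIncoherent P σ ∧ x = trNorm (ρ - lam • σ)} := by
    refine ⟨0, fun x hx => ?_⟩
    obtain ⟨lam, σ, _, _, hxeq⟩ := hx
    rw [hxeq]
    exact htn _
  unfold CTr Crob
  refine le_csInf hBne ?_
  intro b hb
  obtain ⟨hb0, σ, hσinc, hpsd⟩ := hb
  have hk := key b σ hb0 hσinc hpsd
  refine csInf_le hbdd ⟨1 + b, σ, by linarith, hσinc, ?_⟩
  exact (hk.1.trans hk.2).symm

end BlockCoherence
end

section
/- Let P = {P_k} be a complete family of orthogonal projectors and ρ a density matrix. Define C_r(ρ,P) = min_{σ ∈ I_B} S(ρ‖σ), C_max(ρ,P) = min_{σ ∈ I_B} log₂ min{ λ ≥ 1 : ρ ≤ λσ }, and C_rob(ρ,P) = inf{ s ≥ 0 : there exists σ ∈ I_B with ρ ≤ (1+s)σ }. Then C_r(ρ,P) ≤ C_max(ρ,P) ≤ log₂(1 + C_rob(ρ,P)). -/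
open Matrix
open scoped ComplexOrder Classical

namespace BlockCoherence

variable {n : Type*} [Fintype n] [DecidableEq n]

/-- Quantum relative entropy with base-2 logarithm, `+∞` when the support of
`ρ` is not contained in that of `σ`. -/
noncomputable def relent (ρ σ : Matrix n n ℂ) : EReal :=
  if ∀ x : n → ℂ, σ *ᵥ x = 0 → ρ *ᵥ x = 0 then
    ((retr (ρ * mlog2 ρ) - retr (ρ * mlog2 σ) : ℝ) : EReal)
  else ⊤

/-- The relative-entropy block coherence `C_r(ρ,P) = min_{σ∈I_B} S(ρ‖σ)`. -/
noncomputable def Cr {K : Type*} [Fintype K] (P : K → Matrix n n ℂ)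
    (ρ : Matrix n n ℂ) : EReal :=
  sInf {x : EReal | ∃ σ, IsBlockIncoherent P σ ∧ x = relent ρ σ}

/-- The max-relative-entropy block coherence
`C_max(ρ,P) = min_{σ∈I_B} log₂ min { λ ≥ 1 : ρ ≤ λσ }`. -/
noncomputable def Cmax {K : Type*} [Fintype K] (P : K → Matrix n n ℂ)
    (ρ : Matrix n n ℂ) : ℝ :=
  sInf {x : ℝ | ∃ (σ : Matrix n n ℂ) (lam : ℝ), IsBlockIncoherent P σ ∧
    1 ≤ lam ∧ (lam • σ - ρ).PosSemidef ∧ x = Real.logb 2 lam}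


set_option linter.unusedSectionVars false
set_option maxHeartbeats 1000000

section AuxScalar
open Real Finset in
lemma scalar_master {ι : Type*} [Fintype ι] (p r q : ι → ℝ) (lam : ℝ) (hlam : 1 ≤ lam)
    (hp0 : ∀ i, 0 ≤ p i) (hps : ∑ i, p i = 1)
    (hr0 : ∀ j, 0 ≤ r j) (hrs : ∑ j, r j = 1)
    (hq0 : ∀ j, 0 ≤ q j)
    (hrq : ∀ j, r j ≤ lam * q j)
    (key : ∀ s : ℝ, 0 < s → ∑ j, r j * (lam * q j + s)⁻¹ ≤ ∑ i, p i * (p i + s)⁻¹) :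
    ∑ i, p i * Real.logb 2 (p i) - ∑ j, r j * Real.logb 2 (q j) ≤ Real.logb 2 lam := by
  have hlam0 : (0:ℝ) < lam := lt_of_lt_of_le one_pos hlam
  have hlog2 : (0:ℝ) < Real.log 2 := Real.log_pos one_lt_two
  -- reduce to natural log
  have main : ∑ i, p i * Real.log (p i) - ∑ j, r j * Real.log (q j) ≤ Real.log lam := by
    -- rewrite RHS sum
    have hsplit : ∑ j, r j * Real.log (lam * q j)
        = Real.log lam + ∑ j, r j * Real.log (q j) := by
      have : ∀ j, r j * Real.log (lam * q j) = r j * Real.log lam + r j * Real.log (q j) := by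
        intro j
        rcases eq_or_lt_of_le (hq0 j) with h | h
        · have hrj : r j = 0 := le_antisymm (by simpa [← h] using hrq j) (hr0 j)
          simp [hrj]
        · rw [Real.log_mul (ne_of_gt hlam0) (ne_of_gt h), mul_add]
      rw [Finset.sum_congr rfl (fun j _ => this j), Finset.sum_add_distrib, ← Finset.sum_mul,
        hrs, one_mul]
    suffices h : ∑ i, p i * Real.log (p i) ≤ ∑ j, r j * Real.log (lam * q j) by
      rw [hsplit] at h; linarith
    set g : ℝ → ℝ := fun s => ∑ i, p i * Real.log (p i + s) - ∑ j, r j * Real.log (lam * q j + s)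
      with hg
    have hgderiv : ∀ s ∈ Set.Ioi (0:ℝ), HasDerivAt g
        ((∑ i, p i * (p i + s)⁻¹) - ∑ j, r j * (lam * q j + s)⁻¹) s := by
      intro s hs
      have hs0 : (0:ℝ) < s := hs
      apply HasDerivAt.sub
      · apply HasDerivAt.fun_sum
        intro i _
        have hpos : 0 < p i + s := by have := hp0 i; linarith
        have h1 : HasDerivAt (fun t => p i + t) 1 s := (hasDerivAt_id s).const_add (p i)
        have h2 := (h1.log (ne_of_gt hpos)).const_mul (p i)
        rw [one_div] at h2
        exact h2
      · apply HasDerivAt.fun_sum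
        intro j _
        have hpos : 0 < lam * q j + s := by
          have := mul_nonneg (le_of_lt hlam0) (hq0 j); linarith
        have h1 : HasDerivAt (fun t => lam * q j + t) 1 s := (hasDerivAt_id s).const_add _
        have h2 := (h1.log (ne_of_gt hpos)).const_mul (r j)
        rw [one_div] at h2
        exact h2
    have hcont : ContinuousOn g (Set.Ici (0:ℝ)) := by
      apply ContinuousOn.sub
      · apply continuousOn_finset_sum
        intro i _
        rcases eq_or_lt_of_le (hp0 i) with h | h
        · refine ContinuousOn.congr (continuousOn_const (c := (0:ℝ))) ?_
          intro s _; simp [← h]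
        · exact continuousOn_const.mul ((continuousOn_const.add continuousOn_id).log
            (fun s hs => by have : (0:ℝ) ≤ s := hs; exact (by simp only [id]; linarith : (0:ℝ) < p i + id s).ne'))
      · apply continuousOn_finset_sum
        intro j _
        rcases eq_or_lt_of_le (hr0 j) with h | h
        · refine ContinuousOn.congr (continuousOn_const (c := (0:ℝ))) ?_
          intro s _; simp [← h]
        · have hq : 0 < lam * q j := lt_of_lt_of_le h (hrq j)
          exact continuousOn_const.mul ((continuousOn_const.add continuousOn_id).log
            (fun s hs => by have : (0:ℝ) ≤ s := hs; exact (by simp only [id]; linarith : (0:ℝ) < lam * q j + id s).ne'))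
    have hmono : MonotoneOn g (Set.Ici (0:ℝ)) := by
      apply monotoneOn_of_deriv_nonneg (convex_Ici 0) hcont
      · intro s hs
        rw [interior_Ici] at hs
        exact ((hgderiv s hs).differentiableAt).differentiableWithinAt
      · intro s hs
        rw [interior_Ici] at hs
        rw [(hgderiv s hs).deriv]
        have := key s hs
        linarith
    have hbound : ∀ s : ℝ, 0 < s → g s ≤ 1 / s := by
      intro s hs
      have h1 : ∑ j, r j * Real.log s ≤ ∑ j, r j * Real.log (lam * q j + s) := by
        apply Finset.sum_le_sum
        intro j _
        apply mul_le_mul_of_nonneg_left _ (hr0 j)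
        apply Real.log_le_log hs
        have := mul_nonneg (le_of_lt hlam0) (hq0 j); linarith
      have h1' : Real.log s ≤ ∑ j, r j * Real.log (lam * q j + s) := by
        rwa [← Finset.sum_mul, hrs, one_mul] at h1
      have h2 : ∑ i, p i * Real.log (p i + s) - Real.log s ≤ 1 / s := by
        have : ∑ i, p i * Real.log (p i + s) - Real.log s
            = ∑ i, p i * (Real.log (p i + s) - Real.log s) := by
          rw [Finset.sum_congr rfl (fun i _ => mul_sub (p i) _ _), Finset.sum_sub_distrib,
            ← Finset.sum_mul, hps, one_mul]
        rw [this]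
        have hle : ∀ i, p i * (Real.log (p i + s) - Real.log s) ≤ p i * (1 / s) := by
          intro i
          apply mul_le_mul_of_nonneg_left _ (hp0 i)
          rw [← Real.log_div (by have := hp0 i; positivity) (ne_of_gt hs)]
          have hx : 0 < (p i + s) / s := by have := hp0 i; positivity
          have := Real.log_le_sub_one_of_pos hx
          have hpi1 : p i ≤ 1 := by
            have := Finset.single_le_sum (f := p) (fun i _ => hp0 i) (Finset.mem_univ i)
            linarith [hps ▸ this]
          have : Real.log ((p i + s)/s) ≤ p i / s := by
            have hcalc : (p i + s)/s - 1 = p i / s := by field_simp; ring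
            linarith [hcalc ▸ this]
          calc Real.log ((p i + s)/s) ≤ p i / s := this
            _ ≤ 1 / s := by gcongr
        calc ∑ i, p i * (Real.log (p i + s) - Real.log s) ≤ ∑ i, p i * (1/s) :=
              Finset.sum_le_sum (fun i _ => hle i)
          _ = 1 / s := by rw [← Finset.sum_mul, hps, one_mul]
      have : g s = ∑ i, p i * Real.log (p i + s) - ∑ j, r j * Real.log (lam * q j + s) := rfl
      linarith
    have hg0le : g 0 ≤ 0 := by
      by_contra hpos
      push_neg at hpos
      have hmem2 : (2 / g 0) ∈ Set.Ici (0:ℝ) := by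
        have : 0 < 2 / g 0 := by positivity
        exact le_of_lt this
      have hm := hmono (Set.self_mem_Ici) hmem2 (by positivity)
      have hb := hbound (2 / g 0) (by positivity)
      rw [one_div_div] at hb
      have hfin : g 0 ≤ g 0 / 2 := le_trans hm hb
      exact absurd (lt_of_le_of_lt hfin (half_lt_self hpos)) (lt_irrefl _)
    have : g 0 = ∑ i, p i * Real.log (p i) - ∑ j, r j * Real.log (lam * q j) := by
      simp [hg]
    linarith
  -- from natural log to logb
  have e1 : ∀ (c x : ℝ), c * Real.logb 2 x = c * Real.log x / Real.log 2 := by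
    intro c x; rw [Real.logb]; ring
  simp only [e1]
  rw [← Finset.sum_div, ← Finset.sum_div, div_sub_div_same, ← Real.log_div_log]
  gcongr

end AuxScalar

lemma trace_mul_vdv (M V : Matrix n n ℂ) (d : n → ℝ) :
    (Matrix.trace (M * (V * Matrix.diagonal (fun j => ((d j : ℝ) : ℂ)) * star V))).re
      = ∑ j, ((star V * M * V) j j).re * d j := by
  have h1 : M * (V * Matrix.diagonal (fun j => ((d j : ℝ) : ℂ)) * star V)
      = (M * V * Matrix.diagonal (fun j => ((d j : ℝ) : ℂ))) * star V := by
    simp only [mul_assoc]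
  rw [h1, Matrix.trace_mul_comm, ← mul_assoc, ← mul_assoc]
  have h2 : Matrix.trace (star V * M * V * Matrix.diagonal (fun j => ((d j : ℝ) : ℂ)))
      = ∑ j, ((star V * M * V) j j) * ((d j : ℝ) : ℂ) := by
    rw [Matrix.trace]
    congr 1
    ext j
    rw [Matrix.diag_apply, Matrix.mul_diagonal]
  rw [h2]
  simp [Complex.mul_re]

lemma diag_conj_apply (U M : Matrix n n ℂ) (i : n) :
    (star U * M * U) i i = dotProduct (star (fun k => U k i)) (M *ᵥ fun k => U k i) := by
  simp only [Matrix.mul_apply, Matrix.mulVec, dotProduct, Matrix.star_apply,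
    Pi.star_apply, RCLike.star_def, Finset.sum_mul, Finset.mul_sum]
  rw [Finset.sum_comm]
  apply Finset.sum_congr rfl
  intro a _
  apply Finset.sum_congr rfl
  intro b _
  ring

lemma psd_diag (hM : (M : Matrix n n ℂ).PosSemidef) (j : n) :
    0 ≤ (M j j).re ∧ (M j j).im = 0 := by
  have h := hM.dotProduct_mulVec_nonneg (Pi.single j 1)
  have h2 : dotProduct (star (Pi.single j 1)) (M *ᵥ Pi.single j 1) = M j j := by
    simp [Matrix.mulVec_single, dotProduct, Pi.single_apply, apply_ite]
  rw [h2] at h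
  rw [Complex.le_def] at h
  exact ⟨by simpa using h.1, by simpa using h.2.symm⟩


lemma quad_bound (X Y B : Matrix n n ℂ) (hX : X.PosSemidef) (hYX : (Y - X).PosSemidef)
    (w : n → ℂ) (c : ℝ) (hc : 0 < c)
    (hXw : X *ᵥ w = ((c : ℝ) : ℂ) • w) (hw : dotProduct (star w) w = 1)
    (hYB : Y * B = 1) :
    (dotProduct (star w) (B *ᵥ w)).re ≤ c⁻¹ := by
  set u := B *ᵥ w with hu
  have hYu : Y *ᵥ u = w := by rw [hu, Matrix.mulVec_mulVec, hYB, Matrix.one_mulVec]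
  set E : ℂ := dotProduct (star u) w with hE
  -- target is conj E
  have htgt : dotProduct (star w) u = starRingEnd ℂ E := by
    rw [hE]
    simp [dotProduct, Finset.mul_sum, map_sum, mul_comm]
  -- swap lemma for Hermitian X
  have hswap : dotProduct (star w) (X *ᵥ u)
      = dotProduct (star (X *ᵥ w)) u := by
    rw [Matrix.star_mulVec, dotProduct_mulVec (star w) X u, hX.1]
  -- step 1 : expand quadratic
  set z : n → ℂ := u - ((c⁻¹ : ℝ) : ℂ) • w with hz
  have h1 := hX.dotProduct_mulVec_nonneg z
  have hXz : X *ᵥ z = X *ᵥ u - w := by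
    rw [hz, Matrix.mulVec_sub, Matrix.mulVec_smul, hXw, smul_smul]
    norm_cast
    rw [inv_mul_cancel₀ (ne_of_gt hc), one_smul]
  have hexp : dotProduct (star z) (X *ᵥ z)
      = dotProduct (star u) (X *ᵥ u) - E
        - ((c⁻¹ : ℝ) : ℂ) * (((c : ℝ) : ℂ) * starRingEnd ℂ E) + ((c⁻¹ : ℝ) : ℂ) := by
    rw [hXz, hz]
    rw [star_sub, star_smul, sub_dotProduct, dotProduct_sub,
      dotProduct_sub, smul_dotProduct, smul_dotProduct,
      hswap, hXw, star_smul, smul_dotProduct, htgt, hw]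
    simp only [RCLike.star_def, map_inv₀, Complex.conj_ofReal, smul_eq_mul]
    rw [hE]
    ring
  -- step 2
  have h2 : (dotProduct (star u) (X *ᵥ u)).re ≤ E.re := by
    have h3 := hYX.dotProduct_mulVec_nonneg u
    have h4 : dotProduct (star u) ((Y - X) *ᵥ u)
        = E - dotProduct (star u) (X *ᵥ u) := by
      rw [Matrix.sub_mulVec, dotProduct_sub, hYu, hE]
    rw [h4, Complex.le_def] at h3
    have := h3.1
    simp only [Complex.zero_re, Complex.sub_re] at this
    linarith
  -- combine
  rw [hexp, Complex.le_def] at h1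
  have h5 := h1.1
  simp only [Complex.zero_re, Complex.add_re, Complex.sub_re, Complex.mul_re,
    Complex.ofReal_re, Complex.ofReal_im, Complex.conj_re, Complex.conj_im] at h5
  rw [htgt]
  have hcc : c⁻¹ * c = 1 := inv_mul_cancel₀ (ne_of_gt hc)
  simp only [Complex.conj_re]
  have h8 : c⁻¹ * c * E.re = E.re := by rw [hcc, one_mul]
  linarith [h2, h5, h8]

lemma vdv_mul (V : Matrix n n ℂ) (hVsV : star V * V = 1) (d e : n → ℂ) :
    (V * Matrix.diagonal d * star V) * (V * Matrix.diagonal e * star V)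
      = V * Matrix.diagonal (fun j => d j * e j) * star V := by
  have h : Matrix.diagonal d * Matrix.diagonal e = Matrix.diagonal (fun j => d j * e j) := by
    rw [Matrix.diagonal_mul_diagonal]
  simp only [Matrix.mul_assoc]
  rw [← Matrix.mul_assoc (star V) V, hVsV, Matrix.one_mul, ← Matrix.mul_assoc
    (Matrix.diagonal d) (Matrix.diagonal e), h]

lemma master_ineq (ρ σ : Matrix n n ℂ)
    (hρP : ρ.PosSemidef) (hρt : Matrix.trace ρ = 1) (hσP : σ.PosSemidef)
    (lam : ℝ) (hlam : 1 ≤ lam) (hM : ((lam : ℝ) • σ - ρ).PosSemidef) :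
    (Matrix.trace (ρ * mlog2 ρ)).re - (Matrix.trace (ρ * mlog2 σ)).re ≤ Real.logb 2 lam := by
  have hρH : ρ.IsHermitian := hρP.1
  have hσH : σ.IsHermitian := hσP.1
  set U : Matrix n n ℂ := (hρH.eigenvectorUnitary : Matrix n n ℂ) with hU
  set V : Matrix n n ℂ := (hσH.eigenvectorUnitary : Matrix n n ℂ) with hV
  set p : n → ℝ := hρH.eigenvalues with hp
  set q : n → ℝ := hσH.eigenvalues with hq
  have hUsU : star U * U = 1 := Matrix.UnitaryGroup.star_mul_self _
  have hUUs : U * star U = 1 := hρH.eigenvectorUnitary.2.2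
  have hVsV : star V * V = 1 := Matrix.UnitaryGroup.star_mul_self _
  have hVVs : V * star V = 1 := hσH.eigenvectorUnitary.2.2
  have hcoe : (RCLike.ofReal ∘ p : n → ℂ) = fun i => ((p i : ℝ) : ℂ) := rfl
  have hcoeq : (RCLike.ofReal ∘ q : n → ℂ) = fun j => ((q j : ℝ) : ℂ) := rfl
  have hρdec : ρ = U * Matrix.diagonal (fun i => ((p i : ℝ) : ℂ)) * star U := by
    rw [← hcoe]; exact hρH.spectral_theorem
  have hσdec : σ = V * Matrix.diagonal (fun j => ((q j : ℝ) : ℂ)) * star V := by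
    rw [← hcoeq]; exact hσH.spectral_theorem
  have hUdiag : star U * ρ * U = Matrix.diagonal (fun i => ((p i : ℝ) : ℂ)) := by
    rw [← hcoe]; have := hρH.conjStarAlgAut_star_eigenvectorUnitary
    rw [Unitary.conjStarAlgAut_star_apply] at this; exact this
  have hVdiag : star V * σ * V = Matrix.diagonal (fun j => ((q j : ℝ) : ℂ)) := by
    rw [← hcoeq]; have := hσH.conjStarAlgAut_star_eigenvectorUnitary
    rw [Unitary.conjStarAlgAut_star_apply] at this; exact this
  -- eigenvalue facts
  have hp0 : ∀ i, 0 ≤ p i := fun i => hρP.eigenvalues_nonneg i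
  have hq0 : ∀ j, 0 ≤ q j := fun j => hσP.eigenvalues_nonneg j
  have htrρ : Matrix.trace ρ = ∑ i, ((p i : ℝ) : ℂ) := by
    conv_lhs => rw [hρdec]
    rw [Matrix.trace_mul_cycle, hUsU, Matrix.one_mul, Matrix.trace_diagonal]
  have hps : ∑ i, p i = 1 := by
    rw [htrρ] at hρt
    exact_mod_cast hρt
  -- the r weights
  set r : n → ℝ := fun j => ((star V * ρ * V) j j).re with hr
  have hVρV : (star V * ρ * V).PosSemidef := by
    rw [Matrix.star_eq_conjTranspose]
    exact hρP.conjTranspose_mul_mul_same V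
  have hr0 : ∀ j, 0 ≤ r j := fun j => (psd_diag hVρV j).1
  have hrs : ∑ j, r j = 1 := by
    have h1 : Matrix.trace (star V * ρ * V) = 1 := by
      rw [Matrix.trace_mul_cycle, hVVs, Matrix.one_mul, hρt]
    have h2 : ∑ j, r j = (Matrix.trace (star V * ρ * V)).re := by
      rw [Matrix.trace, Complex.re_sum]
      rfl
    rw [h2, h1]; rfl
  -- r j ≤ lam * q j
  have hconj : (star V * ((lam : ℝ) • σ - ρ) * V).PosSemidef := by
    rw [Matrix.star_eq_conjTranspose]
    exact hM.conjTranspose_mul_mul_same V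
  have hexp : star V * ((lam : ℝ) • σ - ρ) * V
      = (lam : ℝ) • Matrix.diagonal (fun j => ((q j : ℝ) : ℂ)) - star V * ρ * V := by
    rw [Matrix.mul_sub, Matrix.sub_mul, ← hVdiag]
    congr 1
    rw [Matrix.mul_smul, Matrix.smul_mul]
  have hrq : ∀ j, r j ≤ lam * q j := by
    intro j
    have h1 := (psd_diag (hexp ▸ hconj) j).1
    have h2 : (((lam : ℝ) • Matrix.diagonal (fun j => ((q j : ℝ) : ℂ))
        - star V * ρ * V) j j).re = lam * q j - r j := by
      rw [Matrix.sub_apply, Matrix.smul_apply, Matrix.diagonal_apply_eq]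
      simp [Complex.real_smul, Complex.mul_re, hr]
    rw [h2] at h1
    linarith
  -- trace identities for the two logs
  have hL1 : (Matrix.trace (ρ * mlog2 ρ)).re = ∑ i, p i * Real.logb 2 (p i) := by
    rw [mlog2, dif_pos hρH]
    rw [trace_mul_vdv ρ U (fun i => Real.logb 2 (p i))]
    apply Finset.sum_congr rfl
    intro i _
    rw [hUdiag, Matrix.diagonal_apply_eq]
    simp
  have hL2 : (Matrix.trace (ρ * mlog2 σ)).re = ∑ j, r j * Real.logb 2 (q j) := by
    rw [mlog2, dif_pos hσH]
    exact trace_mul_vdv ρ V (fun j => Real.logb 2 (q j))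
  rw [hL1, hL2]
  -- apply the scalar master lemma; need the key resolvent inequality
  apply scalar_master p r q lam hlam hp0 hps hr0 hrs hq0 hrq
  intro s hs
  have hposj : ∀ j, 0 < lam * q j + s := by
    intro j
    have := mul_nonneg (le_trans zero_le_one hlam) (hq0 j)
    linarith
  set B : Matrix n n ℂ :=
    V * Matrix.diagonal (fun j => (((lam * q j + s)⁻¹ : ℝ) : ℂ)) * star V with hB
  -- LHS = re trace (ρ * B)
  have ha : ∑ j, r j * (lam * q j + s)⁻¹ = (Matrix.trace (ρ * B)).re := by
    rw [hB, trace_mul_vdv ρ V (fun j => (lam * q j + s)⁻¹)]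
  -- RHS via U basis
  have hb : (Matrix.trace (ρ * B)).re = ∑ i, ((star U * B * U) i i).re * p i := by
    rw [Matrix.trace_mul_comm]
    conv_lhs => rw [hρdec]
    exact trace_mul_vdv B U p
  -- the matrix Y and its inverse B
  have hYB : ((lam : ℝ) • σ + (s : ℝ) • (1 : Matrix n n ℂ)) * B = 1 := by
    have hY : (lam : ℝ) • σ + (s : ℝ) • (1 : Matrix n n ℂ)
        = V * Matrix.diagonal (fun j => ((lam * q j + s : ℝ) : ℂ)) * star V := by
      conv_lhs => rw [hσdec]
      rw [← Matrix.smul_mul, ← Matrix.mul_smul]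
      have h1 : V * ((s : ℝ) • (1 : Matrix n n ℂ)) * star V = (s : ℝ) • (1 : Matrix n n ℂ) := by
        rw [Matrix.mul_smul, Matrix.smul_mul, Matrix.mul_one, hVVs]
      rw [← h1, ← Matrix.add_mul, ← Matrix.mul_add]
      congr 2
      rw [← Matrix.diagonal_one, ← Matrix.diagonal_smul, ← Matrix.diagonal_smul,
        Matrix.diagonal_add]
      congr 1
      funext j
      simp only [Pi.add_apply, Pi.smul_apply, smul_eq_mul, Complex.real_smul,
        Complex.ofReal_mul, mul_one]
      push_cast
      ring
    rw [hY, hB, vdv_mul V hVsV]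
    have hh : (fun j => ((lam * q j + s : ℝ) : ℂ) * (((lam * q j + s)⁻¹ : ℝ) : ℂ))
        = fun _ => (1 : ℂ) := by
      funext j
      rw [← Complex.ofReal_mul, mul_inv_cancel₀ (hposj j).ne']
      norm_num
    rw [hh, Matrix.diagonal_one, Matrix.mul_one, hVVs]
  -- per-index bound
  have hper : ∀ i, ((star U * B * U) i i).re ≤ (p i + s)⁻¹ := by
    intro i
    rw [diag_conj_apply]
    set w : n → ℂ := fun k => U k i with hw
    have hXw : (ρ + (s : ℝ) • (1 : Matrix n n ℂ)) *ᵥ w = ((p i + s : ℝ) : ℂ) • w := by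
      rw [Matrix.add_mulVec, Matrix.smul_mulVec, Matrix.one_mulVec]
      have hcol : ρ *ᵥ w = ((p i : ℝ) : ℂ) • w := by
        funext k
        have h1 : (ρ *ᵥ w) k = (ρ * U) k i := by
          simp [Matrix.mulVec, Matrix.mul_apply, dotProduct, hw]
        have h2 : ρ * U = U * Matrix.diagonal (fun i => ((p i : ℝ) : ℂ)) := by
          conv_lhs => rw [hρdec]
          rw [Matrix.mul_assoc, hUsU, Matrix.mul_one]
        rw [h1, h2, Matrix.mul_diagonal]
        simp [hw, Complex.real_smul]
        ring
      rw [hcol]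
      funext k
      simp [Complex.real_smul]
      push_cast
      ring
    have hnorm : dotProduct (star w) w = 1 := by
      have h1 := diag_conj_apply U (1 : Matrix n n ℂ) i
      rw [Matrix.mul_one, Matrix.one_mulVec, hUsU, Matrix.one_apply_eq] at h1
      exact h1.symm
    have hX : (ρ + (s : ℝ) • (1 : Matrix n n ℂ)).PosSemidef := by
      apply hρP.add
      have : (s : ℝ) • (1 : Matrix n n ℂ) = Matrix.diagonal (fun _ => ((s : ℝ) : ℂ)) := by
        ext a b
        by_cases hab : a = b <;>
          simp [Matrix.smul_apply, Matrix.one_apply, hab, Complex.real_smul]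
      rw [this]
      apply Matrix.PosSemidef.diagonal
      intro j
      rw [Complex.le_def]
      constructor <;> simp [le_of_lt hs]
    have hYX : (((lam : ℝ) • σ + (s : ℝ) • (1 : Matrix n n ℂ))
        - (ρ + (s : ℝ) • (1 : Matrix n n ℂ))).PosSemidef := by
      rw [add_sub_add_right_eq_sub]
      exact hM
    exact quad_bound _ _ _ hX hYX w (p i + s) (by have := hp0 i; linarith) hXw hnorm hYB
  rw [ha, hb]
  calc ∑ i, ((star U * B * U) i i).re * p i ≤ ∑ i, (p i + s)⁻¹ * p i := by
        apply Finset.sum_le_sum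
        intro i _
        exact mul_le_mul_of_nonneg_right (hper i) (hp0 i)
    _ = ∑ i, p i * (p i + s)⁻¹ := by
        apply Finset.sum_congr rfl
        intro i _
        ring


lemma BCaux_support (ρ σ : Matrix n n ℂ) (hρP : ρ.PosSemidef) (lam : ℝ)
    (hM : ((lam : ℝ) • σ - ρ).PosSemidef) :
    ∀ x : n → ℂ, σ *ᵥ x = 0 → ρ *ᵥ x = 0 := by
  intro x hx
  have h1 := hM.dotProduct_mulVec_nonneg x
  have h2 : ((lam : ℝ) • σ - ρ) *ᵥ x = - (ρ *ᵥ x) := by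
    rw [Matrix.sub_mulVec, Matrix.smul_mulVec, hx, smul_zero, zero_sub]
  rw [h2, dotProduct_neg] at h1
  have h3 := hρP.dotProduct_mulVec_nonneg x
  have h4 : dotProduct (star x) (ρ *ᵥ x) = 0 :=
    le_antisymm (by simpa using neg_nonneg.mp (by simpa using h1)) h3
  exact (hρP.dotProduct_mulVec_zero_iff x).mp h4

/-- `C_r(ρ,P) ≤ C_max(ρ,P) ≤ log₂(1 + C_rob(ρ,P))`. -/
theorem Cr_le_Cmax_le_log_Crob
    {K : Type*} [Fintype K]
    (P : K → Matrix n n ℂ) (hP : IsProjFamily P)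
    (ρ : Matrix n n ℂ) (hρ : IsDensityMatrix ρ) :
    Cr P ρ ≤ (Cmax P ρ : EReal) ∧ Cmax P ρ ≤ Real.logb 2 (1 + Crob P ρ) := by
  classical
  -- nonemptiness of the index type
  have hne : Nonempty n := by
    by_contra h
    rw [not_nonempty_iff] at h
    have h0 : Matrix.trace ρ = 0 := by simp [Matrix.trace]
    exact one_ne_zero (hρ.2.symm.trans h0)
  have hcard : (0 : ℝ) < (Fintype.card n : ℝ) := by
    exact_mod_cast Fintype.card_pos
  have hcard1 : (1 : ℝ) ≤ (Fintype.card n : ℝ) := by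
    exact_mod_cast Fintype.card_pos
  -- the maximally mixed state
  set σ0 : Matrix n n ℂ := ((Fintype.card n : ℝ)⁻¹ : ℝ) • (1 : Matrix n n ℂ) with hσ0
  have hσ0diag : σ0 = Matrix.diagonal (fun _ => (((Fintype.card n : ℝ)⁻¹ : ℝ) : ℂ)) := by
    ext a b
    by_cases hab : a = b <;>
      simp [hσ0, Matrix.smul_apply, Matrix.one_apply, hab, Complex.real_smul]
  have hσ0psd : σ0.PosSemidef := by
    rw [hσ0diag]
    apply Matrix.PosSemidef.diagonal
    intro j
    rw [Complex.le_def]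
    constructor <;> simp [le_of_lt (inv_pos.mpr hcard)]
  have hσ0tr : Matrix.trace σ0 = 1 := by
    rw [hσ0, Matrix.trace_smul, Matrix.trace_one]
    rw [Complex.real_smul]
    push_cast
    field_simp
  have hσ0inc : IsBlockIncoherent P σ0 := by
    refine ⟨⟨hσ0psd, hσ0tr⟩, ?_⟩
    rw [deph]
    have hterm : ∀ k, P k * σ0 * P k = ((Fintype.card n : ℝ)⁻¹ : ℝ) • P k := by
      intro k
      rw [hσ0, Matrix.mul_smul, Matrix.mul_one, Matrix.smul_mul, hP.2.1 k]
    rw [Finset.sum_congr rfl (fun k _ => hterm k), ← Finset.smul_sum, hP.2.2.2]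
  -- 1 - ρ is PSD
  have h1ρ : ((1 : Matrix n n ℂ) - ρ).PosSemidef := by
    have hρH : ρ.IsHermitian := hρ.1.1
    set U : Matrix n n ℂ := (hρH.eigenvectorUnitary : Matrix n n ℂ) with hU
    set p : n → ℝ := hρH.eigenvalues with hp
    have hUsU : star U * U = 1 := Matrix.UnitaryGroup.star_mul_self _
    have hUUs : U * star U = 1 := hρH.eigenvectorUnitary.2.2
    have hρdec : ρ = U * Matrix.diagonal (fun i => ((p i : ℝ) : ℂ)) * star U :=
      hρH.spectral_theorem
    have hps : ∑ i, p i = 1 := by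
      have htr : Matrix.trace ρ = ∑ i, ((p i : ℝ) : ℂ) := by
        conv_lhs => rw [hρdec]
        rw [Matrix.trace_mul_cycle, hUsU, Matrix.one_mul, Matrix.trace_diagonal]
      have h2 := hρ.2
      rw [htr] at h2
      exact_mod_cast h2
    have hp0 : ∀ i, 0 ≤ p i := fun i => hρ.1.eigenvalues_nonneg i
    have hsub : (1 : Matrix n n ℂ) - ρ
        = U * Matrix.diagonal (fun i => ((1 - p i : ℝ) : ℂ)) * star U := by
      have h1 : (1 : Matrix n n ℂ) = U * 1 * star U := by
        rw [Matrix.mul_one, hUUs]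
      conv_lhs => rw [h1, hρdec]
      rw [← Matrix.sub_mul, ← Matrix.mul_sub]
      congr 2
      rw [← Matrix.diagonal_one, Matrix.diagonal_sub]
      congr 1
      funext i
      push_cast
      ring
    rw [hsub, Matrix.star_eq_conjTranspose]
    apply Matrix.PosSemidef.mul_mul_conjTranspose_same
    apply Matrix.PosSemidef.diagonal
    intro i
    have hpile : p i ≤ 1 := by
      have hsgl := Finset.single_le_sum (f := p) (fun i _ => hp0 i) (Finset.mem_univ i)
      linarith [hps ▸ hsgl]
    rw [Complex.le_def]
    constructor <;> simp [sub_nonneg.mpr hpile]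
  have hwitpsd : (((Fintype.card n : ℝ)) • σ0 - ρ).PosSemidef := by
    have hcc : ((Fintype.card n : ℝ)) • σ0 = (1 : Matrix n n ℂ) := by
      rw [hσ0, smul_smul, mul_inv_cancel₀ (ne_of_gt hcard), one_smul]
    rw [hcc]
    exact h1ρ
  -- the set defining Cmax
  set T : Set ℝ := {x : ℝ | ∃ (σ : Matrix n n ℂ) (lam : ℝ), IsBlockIncoherent P σ ∧
    1 ≤ lam ∧ (lam • σ - ρ).PosSemidef ∧ x = Real.logb 2 lam} with hT
  have hT_ne : T.Nonempty :=
    ⟨Real.logb 2 (Fintype.card n : ℝ), σ0, (Fintype.card n : ℝ), hσ0inc, hcard1, hwitpsd, rfl⟩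
  have hT_bdd : BddBelow T := by
    refine ⟨0, ?_⟩
    rintro x ⟨σ, lam, hinc, hlam, hpsd, rfl⟩
    exact Real.logb_nonneg one_lt_two hlam
  have hCmax : Cmax P ρ = sInf T := rfl
  constructor
  · -- Part 1 : Cr ≤ Cmax
    have hub : ∀ x ∈ T, Cr P ρ ≤ (x : EReal) := by
      rintro x ⟨σ, lam, hinc, hlam, hpsd, rfl⟩
      have h1 : Cr P ρ ≤ relent ρ σ := sInf_le ⟨σ, hinc, rfl⟩
      have h2 : relent ρ σ ≤ ((Real.logb 2 lam : ℝ) : EReal) := by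
        rw [relent, if_pos (BCaux_support ρ σ hρ.1 lam hpsd)]
        rw [EReal.coe_le_coe_iff]
        exact master_ineq ρ σ hρ.1 hρ.2 hinc.1.1 lam hlam hpsd
      exact le_trans h1 h2
    rw [hCmax]
    obtain ⟨x0, hx0⟩ := hT_ne
    have hx0' := hub x0 hx0
    have hne_top : Cr P ρ ≠ ⊤ := by
      intro h
      rw [h] at hx0'
      exact absurd hx0' (by simp)
    by_cases hbot : Cr P ρ = ⊥
    · rw [hbot]; exact bot_le
    · have hca : Cr P ρ = (((Cr P ρ).toReal : ℝ) : EReal) :=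
        (EReal.coe_toReal hne_top hbot).symm
      rw [hca, EReal.coe_le_coe_iff]
      apply le_csInf ⟨x0, hx0⟩
      intro x hx
      exact EReal.coe_le_coe_iff.mp (hca ▸ hub x hx)
  · -- Part 2 : Cmax ≤ logb 2 (1 + Crob)
    set S : Set ℝ := {s : ℝ | 0 ≤ s ∧ ∃ σ, IsBlockIncoherent P σ ∧
      ((1 + s) • σ - ρ).PosSemidef} with hS
    have hS_ne : S.Nonempty := by
      refine ⟨(Fintype.card n : ℝ) - 1, by linarith, σ0, hσ0inc, ?_⟩
      have hcc : (1 + ((Fintype.card n : ℝ) - 1)) = (Fintype.card n : ℝ) := by ring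
      rw [hcc]
      exact hwitpsd
    have hS_bdd : BddBelow S := ⟨0, fun s hs => hs.1⟩
    have hCrob : Crob P ρ = sInf S := rfl
    have ha0 : 0 ≤ sInf S := le_csInf hS_ne (fun s hs => hs.1)
    have hstep : ∀ s ∈ S, sInf T ≤ Real.logb 2 (1 + s) := by
      rintro s ⟨hs0, σ, hinc, hpsd⟩
      apply csInf_le hT_bdd
      exact ⟨σ, 1 + s, hinc, by linarith, hpsd, rfl⟩
    rw [hCmax, hCrob]
    -- limit argument
    have hev : ∀ ε : ℝ, 0 < ε → sInf T ≤ Real.logb 2 (1 + (sInf S + ε)) := by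
      intro ε hε
      obtain ⟨s, hsS, hslt⟩ := exists_lt_of_csInf_lt hS_ne
        (show sInf S < sInf S + ε by linarith)
      calc sInf T ≤ Real.logb 2 (1 + s) := hstep s hsS
        _ ≤ Real.logb 2 (1 + (sInf S + ε)) := by
            apply Real.logb_le_logb_of_le one_lt_two (by linarith [hsS.1]) (by linarith)
    have htend : Filter.Tendsto (fun ε : ℝ => Real.logb 2 (1 + (sInf S + ε)))
        (nhdsWithin 0 (Set.Ioi 0)) (nhds (Real.logb 2 (1 + sInf S))) := by
      have hcont : ContinuousAt (fun ε : ℝ => Real.logb 2 (1 + (sInf S + ε))) 0 := by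
        apply ContinuousAt.comp (g := Real.logb 2) (Real.continuousAt_logb (by positivity))
        fun_prop
      have hcw := hcont.continuousWithinAt (s := Set.Ioi (0:ℝ))
      simpa using hcw.tendsto
    apply ge_of_tendsto htend
    filter_upwards [self_mem_nhdsWithin] with ε hε
    exact hev ε hε

end BlockCoherence
end

section
/- For every real x ∈ [0,1], 2√(x(1−x)) ≥ −x log₂ x − (1−x) log₂(1−x) (with the convention 0 log₂ 0 = 0); i.e., twice the square root of x(1−x) dominates the binary entropy function. Consequently, for pure states in the singlet–triplet setting, the improved l₁-type measure C̃_{l₁} dominates the relative-entropy measure C_r. -/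
open Matrix
open scoped ComplexOrder Classical

namespace BlockCoherence

variable {n : Type*} [Fintype n] [DecidableEq n]

lemma aux_artanh : ∀ s : ℝ, 0 ≤ s → s < 1 →
    2*s ≤ Real.log (1+s) - Real.log (1-s) := by
  intro s hs0 hs1
  set f : ℝ → ℝ := fun t => Real.log (1+t) - Real.log (1-t) - 2*t with hf
  have key : ∀ t ∈ Set.Icc (0:ℝ) s, HasDerivAt f (1/(1+t) + 1/(1-t) - 2) t := by
    intro t ht
    have h1 : (0:ℝ) < 1 + t := by linarith [ht.1]
    have h2 : (0:ℝ) < 1 - t := by linarith [ht.2]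
    have d1 : HasDerivAt (fun t : ℝ => Real.log (1+t)) (1/(1+t)) t := by
      have := ((hasDerivAt_id t).const_add (1:ℝ)).log h1.ne'
      simpa using this
    have d2 : HasDerivAt (fun t : ℝ => Real.log (1-t)) (-1/(1-t)) t := by
      have h' : HasDerivAt (fun t : ℝ => 1 - t) (-1) t := by
        exact (hasDerivAt_id t).const_sub (1:ℝ)
      have := h'.log h2.ne'
      simpa using this
    have d3 : HasDerivAt (fun t : ℝ => 2*t) 2 t := by
      simpa using (hasDerivAt_id t).const_mul (2:ℝ)
    have := (d1.sub d2).sub d3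
    refine this.congr_deriv ?_
    ring
  have hmono : MonotoneOn f (Set.Icc 0 s) := by
    apply monotoneOn_of_deriv_nonneg (convex_Icc 0 s)
    · exact fun t ht => (key t ht).continuousAt.continuousWithinAt
    · intro t ht
      rw [interior_Icc] at ht
      exact ((key t (Set.mem_Icc_of_Ioo ht)).differentiableAt).differentiableWithinAt
    · intro t ht
      rw [interior_Icc] at ht
      rw [(key t (Set.mem_Icc_of_Ioo ht)).deriv]
      have h1 : (0:ℝ) < 1 + t := by linarith [ht.1]
      have h2 : (0:ℝ) < 1 - t := by linarith [ht.2, hs1]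
      have : 1/(1+t) + 1/(1-t) - 2 = 2*t^2/((1+t)*(1-t)) := by field_simp; ring
      rw [this]; positivity
  have h0 : f 0 ≤ f s := hmono (Set.left_mem_Icc.2 hs0) (Set.right_mem_Icc.2 hs0) hs0
  simp only [hf] at h0
  norm_num at h0
  linarith

lemma aux_series : ∀ s : ℝ, 0 ≤ s → s < 1 →
    s^2 ≤ (1+s)*Real.log (1+s) + (1-s)*Real.log (1-s) := by
  intro s hs0 hs1
  set f : ℝ → ℝ := fun t => (1+t)*Real.log (1+t) + (1-t)*Real.log (1-t) - t^2 with hf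
  have key : ∀ t ∈ Set.Icc (0:ℝ) s,
      HasDerivAt f (Real.log (1+t) - Real.log (1-t) - 2*t) t := by
    intro t ht
    have h1 : (0:ℝ) < 1 + t := by linarith [ht.1]
    have h2 : (0:ℝ) < 1 - t := by linarith [ht.2]
    have i1 : HasDerivAt (fun t : ℝ => 1 + t) 1 t := by
      simpa using (hasDerivAt_id t).const_add (1:ℝ)
    have i2 : HasDerivAt (fun t : ℝ => 1 - t) (-1) t := by
      exact (hasDerivAt_id t).const_sub (1:ℝ)
    have d1 : HasDerivAt (fun t : ℝ => (1+t)*Real.log (1+t))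
        (1 * Real.log (1+t) + (1+t) * (1/(1+t))) t := by
      have dl1 : HasDerivAt (fun t : ℝ => Real.log (1+t)) (1/(1+t)) t := by
        simpa using i1.log h1.ne'
      exact i1.mul dl1
    have d2 : HasDerivAt (fun t : ℝ => (1-t)*Real.log (1-t))
        ((-1) * Real.log (1-t) + (1-t) * (-1/(1-t))) t := by
      have dl2 : HasDerivAt (fun t : ℝ => Real.log (1-t)) (-1/(1-t)) t := by
        simpa using i2.log h2.ne'
      exact i2.mul dl2
    have d3 : HasDerivAt (fun t : ℝ => t^2) (2*t) t := by
      simpa using (hasDerivAt_pow 2 t)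
    have := (d1.add d2).sub d3
    refine this.congr_deriv ?_
    rw [mul_one_div_cancel h1.ne', neg_div, mul_neg, mul_one_div_cancel h2.ne']
    ring
  have hmono : MonotoneOn f (Set.Icc 0 s) := by
    apply monotoneOn_of_deriv_nonneg (convex_Icc 0 s)
    · exact fun t ht => (key t ht).continuousAt.continuousWithinAt
    · intro t ht
      rw [interior_Icc] at ht
      exact ((key t (Set.mem_Icc_of_Ioo ht)).differentiableAt).differentiableWithinAt
    · intro t ht
      rw [interior_Icc] at ht
      rw [(key t (Set.mem_Icc_of_Ioo ht)).deriv]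
      have := aux_artanh t (le_of_lt ht.1) (lt_of_lt_of_le ht.2 hs1.le)
      linarith
  have h0 : f 0 ≤ f s := hmono (Set.left_mem_Icc.2 hs0) (Set.right_mem_Icc.2 hs0) hs0
  simp only [hf] at h0
  norm_num at h0
  linarith

set_option maxHeartbeats 1000000 in
lemma aux_half : ∀ x : ℝ, 0 < x → x ≤ 1/2 →
    -(x * Real.log x) - (1-x) * Real.log (1-x)
      ≤ 2 * Real.log 2 * Real.sqrt (x*(1-x)) := by
  intro x hx0 hx12
  have hx1 : x < 1 := by linarith
  have h1x : (0:ℝ) < 1 - x := by linarith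
  have hL1 : (0.6931471803:ℝ) < Real.log 2 := Real.log_two_gt_d9
  have hL2 : Real.log 2 < 0.6931471808 := Real.log_two_lt_d9
  -- the piece -(1-x) log(1-x) ≤ x, valid everywhere
  have hpiece : -((1-x) * Real.log (1-x)) ≤ x := by
    have h := Real.log_le_sub_one_of_pos (inv_pos.2 h1x)
    rw [Real.log_inv] at h
    -- h : -log (1-x) ≤ (1-x)⁻¹ - 1
    have h2 : (1-x) * (-Real.log (1-x)) ≤ (1-x) * ((1-x)⁻¹ - 1) :=
      mul_le_mul_of_nonneg_left h h1x.le
    have h3 : (1-x) * ((1-x)⁻¹ - 1) = x := by field_simp; ring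
    nlinarith [h2, h3]
  by_cases hc : x ≤ 1/20
  · -- tail case
    set v : ℝ := x ^ ((1:ℝ)/4) with hv
    have hv0 : 0 < v := Real.rpow_pos_of_pos hx0 _
    have hv4 : v^(4:ℕ) = x := by
      rw [hv, ← Real.rpow_natCast (x ^ ((1:ℝ)/4)) 4, ← Real.rpow_mul hx0.le]
      norm_num
    have hsq : Real.sqrt x = v^2 := by
      rw [← hv4, show (v:ℝ)^(4:ℕ) = (v^2)^2 by ring, Real.sqrt_sq (by positivity)]
    have hA : -(v * Real.log v) ≤ 1 - v := by
      have h := Real.log_le_sub_one_of_pos (inv_pos.2 hv0)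
      rw [Real.log_inv] at h
      have h2 : v * (-Real.log v) ≤ v * (v⁻¹ - 1) := mul_le_mul_of_nonneg_left h hv0.le
      have h3 : v * (v⁻¹ - 1) = 1 - v := by field_simp
      nlinarith [h2, h3]
    rw [Real.sqrt_mul hx0.le, hsq]
    rw [← hv4] at hpiece ⊢
    rw [Real.log_pow]
    push_cast
    set w : ℝ := Real.sqrt (1 - v^4) with hwdef
    have hw2 : w^2 = 1 - v^4 := Real.sq_sqrt (by nlinarith [hv4])
    have hwnn : 0 ≤ w := Real.sqrt_nonneg _
    have hx20 : v^4 ≤ 1/20 := by rw [hv4]; exact hc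
    have hwlb : 0.974 ≤ w := by nlinarith [hw2, hwnn, hx20]
    have hvlog : 4*v^3*(-(v*Real.log v)) ≤ 4*v^3*(1-v) :=
      mul_le_mul_of_nonneg_left hA (by positivity)
    have hq : 0 ≤ 2*Real.log 2*w - 4*v + 3*v^2 := by
      nlinarith [sq_nonneg (3*v - 2), hwlb, hL1]
    nlinarith [hvlog, hpiece, mul_nonneg (sq_nonneg v) hq]
  · -- middle case
    push_neg at hc
    have hB := aux_series (1 - 2*x) (by linarith) (by linarith)
    have e1 : 1 + (1 - 2*x) = 2*(1-x) := by ring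
    have e2 : 1 - (1 - 2*x) = 2*x := by ring
    rw [e1, e2, Real.log_mul two_ne_zero h1x.ne', Real.log_mul two_ne_zero hx0.ne'] at hB
    set w : ℝ := Real.sqrt (x*(1-x)) with hwdef
    have hw2 : w^2 = x*(1-x) := Real.sq_sqrt (by positivity)
    have hwnn : 0 ≤ w := Real.sqrt_nonneg _
    have hxq : (19:ℝ)/400 ≤ x*(1-x) := by nlinarith
    have hwlb : 0.217 ≤ w := by nlinarith [hw2, hwnn, hxq]
    have hwub : 2*w ≤ 1 := by nlinarith [hw2, sq_nonneg (2*w - 1), sq_nonneg (1-2*x)]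
    have hprod : 0 ≤ (1 - 2*w) * (1 + 2*w - 2*Real.log 2) := by
      apply mul_nonneg <;> nlinarith
    nlinarith [hB, hw2, hprod]

lemma aux_key : ∀ x : ℝ, 0 ≤ x → x ≤ 1 →
    -(x * Real.log x) - (1-x) * Real.log (1-x)
      ≤ 2 * Real.log 2 * Real.sqrt (x*(1-x)) := by
  intro x hx0 hx1
  rcases eq_or_lt_of_le hx0 with h0 | h0
  · simp [← h0]
  rcases eq_or_lt_of_le hx1 with h1 | h1
  · simp [h1]
  by_cases hc : x ≤ 1/2
  · exact aux_half x h0 hc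
  · have h := aux_half (1-x) (by linarith) (by linarith)
    have e1 : 1 - (1-x) = x := by ring
    rw [e1] at h
    have e2 : (1-x)*x = x*(1-x) := by ring
    rw [e2] at h
    linarith


/-- for `x ∈ [0,1]`, twice the square root of `x(1-x)` dominates
the binary entropy: `2√(x(1-x)) ≥ -x log₂ x - (1-x) log₂ (1-x)`; hence for pure
states the improved `l₁`-type measure dominates the relative-entropy measure. -/
theorem binaryEntropy_le_two_sqrt (x : ℝ) (hx : x ∈ Set.Icc (0 : ℝ) 1) :
    -(x * Real.logb 2 x) - (1 - x) * Real.logb 2 (1 - x) ≤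
      2 * Real.sqrt (x * (1 - x)) := by
  obtain ⟨hx0, hx1⟩ := hx
  have hL : (0:ℝ) < Real.log 2 := Real.log_pos one_lt_two
  have key := aux_key x hx0 hx1
  simp only [Real.logb]
  rw [show -(x * (Real.log x / Real.log 2)) - (1 - x) * (Real.log (1-x) / Real.log 2)
      = (-(x * Real.log x) - (1-x) * Real.log (1-x)) / Real.log 2 by ring]
  rw [div_le_iff₀ hL]
  calc -(x * Real.log x) - (1-x) * Real.log (1-x)
      ≤ 2 * Real.log 2 * Real.sqrt (x*(1-x)) := key
    _ = 2 * Real.sqrt (x*(1-x)) * Real.log 2 := by ring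

end BlockCoherence
end

section
/- Let ρ be an n×n density matrix with positive semidefinite square root √ρ, and let Q be an n×n Hermitian matrix. Then Tr(√ρ Q √ρ Q) ≥ [Tr(ρ Q)]². Consequently, for a Hermitian projector Q (Q² = Q), the variance Var(ρ,Q) = Tr(ρQ²) − [Tr(ρQ)]² dominates the Wigner–Yanase skew information I_{WY}(ρ,Q) = Tr(ρQ²) − Tr(√ρ Q √ρ Q). -/
open Matrix
open scoped ComplexOrder Classical

namespace BlockCoherence

variable {n : Type*} [Fintype n] [DecidableEq n]

lemma msqrt_psd (A : Matrix n n ℂ) (hA : A.PosSemidef) : (msqrt A).PosSemidef := by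
  rw [msqrt, dif_pos hA]
  exact (posSemidef_diagonal_iff.2 fun i =>
    Complex.zero_le_real.2 (Real.sqrt_nonneg _)).mul_mul_conjTranspose_same _

lemma msqrt_mul_self (A : Matrix n n ℂ) (hA : A.PosSemidef) : msqrt A * msqrt A = A := by
  rw [msqrt, dif_pos hA]
  set U : Matrix n n ℂ := (hA.1.eigenvectorUnitary : Matrix n n ℂ) with hUd
  have hU : star U * U = 1 := Unitary.coe_star_mul_self _
  have hU' : ∀ X : Matrix n n ℂ, star U * (U * X) = X := by
    intro X; rw [← mul_assoc, hU, one_mul]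
  have hD : Matrix.diagonal (fun i => ((Real.sqrt (hA.1.eigenvalues i) : ℝ) : ℂ)) *
      Matrix.diagonal (fun i => ((Real.sqrt (hA.1.eigenvalues i) : ℝ) : ℂ)) =
      Matrix.diagonal (RCLike.ofReal ∘ hA.1.eigenvalues) := by
    rw [diagonal_mul_diagonal]; congr 1; funext i
    rw [← Complex.ofReal_mul, Real.mul_self_sqrt (hA.eigenvalues_nonneg i)]; rfl
  calc U * Matrix.diagonal (fun i => ((Real.sqrt (hA.1.eigenvalues i) : ℝ) : ℂ)) * star U *
        (U * Matrix.diagonal (fun i => ((Real.sqrt (hA.1.eigenvalues i) : ℝ) : ℂ)) * star U)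
      = U * (Matrix.diagonal (fun i => ((Real.sqrt (hA.1.eigenvalues i) : ℝ) : ℂ)) *
        Matrix.diagonal (fun i => ((Real.sqrt (hA.1.eigenvalues i) : ℝ) : ℂ))) * star U := by
        simp only [mul_assoc, hU']
    _ = A := by
        rw [hD]
        conv_rhs => rw [hA.1.spectral_theorem]
        rfl

omit [DecidableEq n] in
lemma re_trace_ct (A B : Matrix n n ℂ) :
    (Matrix.trace (Aᴴ * B)).re =
      ∑ i, ∑ j, ((A i j).im * (B i j).im + (A i j).re * (B i j).re) := by
  rw [Finset.sum_comm]
  simp [Matrix.trace, Matrix.diag, Matrix.mul_apply, Complex.mul_re]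
  congr 1; funext j; congr 1; funext i; ring

omit [DecidableEq n] in
lemma re_trace_ct_self (A : Matrix n n ℂ) :
    (Matrix.trace (Aᴴ * A)).re = ∑ i, ∑ j, ((A i j).im ^ 2 + (A i j).re ^ 2) := by
  rw [re_trace_ct]; congr 1; funext i; congr 1; funext j; ring

omit [DecidableEq n] in
lemma trace_CS (A B : Matrix n n ℂ) :
    ((Matrix.trace (Aᴴ * B)).re) ^ 2 ≤
      (Matrix.trace (Aᴴ * A)).re * (Matrix.trace (Bᴴ * B)).re := by
  classical
  have h := Finset.sum_mul_sq_le_sq_mul_sq (Finset.univ : Finset (n × n × Bool))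
    (fun p => if p.2.2 then (A p.1 p.2.1).im else (A p.1 p.2.1).re)
    (fun p => if p.2.2 then (B p.1 p.2.1).im else (B p.1 p.2.1).re)
  simp only [Fintype.sum_prod_type, Fintype.sum_bool, Bool.false_eq_true, if_true, if_false] at h
  rw [re_trace_ct, re_trace_ct_self, re_trace_ct_self]
  exact h

/-- `Tr(√ρ Q √ρ Q) ≥ [Tr(ρQ)]²` for Hermitian `Q`; consequently
for a Hermitian projector `Q`, the variance dominates the Wigner-Yanase skew
information. -/
theorem skewInformation_le_variance
    (ρ Q : Matrix n n ℂ) (hρ : IsDensityMatrix ρ) (hQ : Q.IsHermitian) :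
    (retr (ρ * Q)) ^ 2 ≤ retr (msqrt ρ * Q * msqrt ρ * Q) ∧
      (Q * Q = Q →
        retr (ρ * (Q * Q)) - retr (msqrt ρ * Q * msqrt ρ * Q) ≤
          retr (ρ * (Q * Q)) - (retr (ρ * Q)) ^ 2) := by
  obtain ⟨hρp, htr⟩ := hρ
  have hS : (msqrt ρ).PosSemidef := msqrt_psd ρ hρp
  have hSS : msqrt ρ * msqrt ρ = ρ := msqrt_mul_self ρ hρp
  set S : Matrix n n ℂ := msqrt ρ with hSd
  set T : Matrix n n ℂ := msqrt S with hTd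
  have hT : T.PosSemidef := msqrt_psd S hS
  have hTT : T * T = S := msqrt_mul_self S hS
  have hTh : Tᴴ = T := hT.1
  have hSh : Sᴴ = S := hS.1
  set X : Matrix n n ℂ := T * Q * T with hXd
  have hXh : Xᴴ = X := by
    rw [hXd, conjTranspose_mul, conjTranspose_mul, hTh, hQ.eq, mul_assoc]
  have h1 : Matrix.trace (Xᴴ * S) = Matrix.trace (ρ * Q) := by
    rw [hXh]
    have e1 : X * S = (T * Q) * (T * S) := by rw [hXd]; simp [mul_assoc]
    have e2 : (T * S) * (T * Q) = ρ * Q := by rw [← hSS, ← hTT]; simp [mul_assoc]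
    rw [e1, trace_mul_comm, e2]
  have h2 : Matrix.trace (Xᴴ * X) = Matrix.trace (S * Q * S * Q) := by
    rw [hXh]
    have e1 : X * X = T * (Q * T * T * Q * T) := by rw [hXd]; simp [mul_assoc]
    have e2 : (Q * T * T * Q * T) * T = Q * (S * Q * S) := by
      rw [← hTT]; simp [mul_assoc]
    rw [e1, trace_mul_comm, e2, trace_mul_comm]
  have h3 : Matrix.trace (Sᴴ * S) = 1 := by rw [hSh, hSS, htr]
  have key : (retr (ρ * Q)) ^ 2 ≤ retr (S * Q * S * Q) := by
    have hcs := trace_CS X S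
    rw [h1, h2, h3] at hcs
    simpa [retr] using hcs
  exact ⟨key, fun _ => sub_le_sub_left key _⟩


end BlockCoherence
end
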